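/- arXiv:0911.1983 — 8 statements merged into one kernel-verified Lean document; each statement's English description precedes it below -/
import Mathlib

section
/- Let V₁, V₂ be closed subspaces of a Hilbert space with Friedrichs angle α. For any nonzero v₁ ∈ V₁ orthogonal to V₁ ∩ V₂, the norm of the projection of v₁ onto the orthogonal complement V₂^⊥ satisfies ‖P_{V₂^⊥}(v₁)‖ ≥ ‖v₁‖ · sin α. -/
open scoped RealInnerProductSpace

/-- The cosine of the Friedrichs angle between two subspaces. -/
noncomputable def friedrichsCos {H : Type*} [NormedAddCommGroup H] [InnerProductSpace ℝ H]
    (V₁ V₂ : Submodule ℝ H) : ℝ :=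
  sSup {r : ℝ | ∃ v₁ v₂ : H, v₁ ∈ V₁ ∧ v₂ ∈ V₂ ∧ ‖v₁‖ = 1 ∧ ‖v₂‖ = 1 ∧
    v₁ ∈ (V₁ ⊓ V₂)ᗮ ∧ v₂ ∈ (V₁ ⊓ V₂)ᗮ ∧ r = |⟪v₁, v₂⟫|}

theorem norm_projection_complement_ge_sin_angle
    {H : Type*} [NormedAddCommGroup H] [InnerProductSpace ℝ H] [CompleteSpace H]
    (V₁ V₂ : Submodule ℝ H) (hV₁ : IsClosed (V₁ : Set H)) (hV₂ : IsClosed (V₂ : Set H)) [CompleteSpace V₂]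
    (α : ℝ) (hα₀ : 0 ≤ α) (hα₁ : α ≤ Real.pi / 2)
    (hcos : Real.cos α = friedrichsCos V₁ V₂)
    (v₁ : H) (hv₁ : v₁ ∈ V₁) (hne : v₁ ≠ 0) (hperp : v₁ ∈ (V₁ ⊓ V₂)ᗮ) :
    ‖v₁‖ * Real.sin α ≤ ‖(Submodule.orthogonalProjection V₂ᗮ v₁ : H)‖ := by
  set a : H := (Submodule.orthogonalProjection V₂ v₁ : H) with ha
  set b : H := (Submodule.orthogonalProjection V₂ᗮ v₁ : H) with hb
  have hcos0 : 0 ≤ Real.cos α :=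
    Real.cos_nonneg_of_mem_Icc ⟨by linarith [Real.pi_div_two_pos.le], hα₁⟩
  have hsin0 : 0 ≤ Real.sin α :=
    Real.sin_nonneg_of_nonneg_of_le_pi hα₀ (by linarith [Real.pi_div_two_pos.le])
  have hv₁pos : 0 < ‖v₁‖ := norm_pos_iff.mpr hne
  -- a ⊥ (V₁ ⊓ V₂)
  have haperp : a ∈ (V₁ ⊓ V₂)ᗮ := by
    intro w hw
    have h1 : ⟪a, w⟫ = ⟪v₁, (Submodule.orthogonalProjection V₂ w : H)⟫ :=
      Submodule.inner_starProjection_left_eq_right V₂ v₁ w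
    rw [show (Submodule.orthogonalProjection V₂ w : H) = w from Submodule.starProjection_eq_self_iff.mpr hw.2] at h1
    rw [real_inner_comm, h1, real_inner_comm]
    exact hperp w hw
  -- key: ‖a‖ ≤ cos α * ‖v₁‖
  have hkey : ‖a‖ ≤ Real.cos α * ‖v₁‖ := by
    rcases eq_or_ne a 0 with h0 | h0
    · rw [h0, norm_zero]; positivity
    · have hapos : 0 < ‖a‖ := norm_pos_iff.mpr h0
      have hinner : ⟪v₁, a⟫ = ‖a‖ ^ 2 := by
        have hmem2 : v₁ - a ∈ V₂ᗮ := Submodule.sub_starProjection_mem_orthogonal v₁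
        have h0' : ⟪a, v₁ - a⟫ = 0 := hmem2 a (Submodule.orthogonalProjection V₂ v₁).2
        rw [inner_sub_right] at h0'
        have h3 : ⟪a, v₁⟫ = ⟪a, a⟫ := sub_eq_zero.mp h0'
        rw [real_inner_comm, h3, real_inner_self_eq_norm_sq]
      have hbdd : BddAbove {r : ℝ | ∃ u₁ u₂ : H, u₁ ∈ V₁ ∧ u₂ ∈ V₂ ∧ ‖u₁‖ = 1 ∧ ‖u₂‖ = 1 ∧
          u₁ ∈ (V₁ ⊓ V₂)ᗮ ∧ u₂ ∈ (V₁ ⊓ V₂)ᗮ ∧ r = |⟪u₁, u₂⟫|} := by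
        refine ⟨1, ?_⟩
        rintro r ⟨u₁, u₂, _, _, hn1, hn2, _, _, rfl⟩
        calc |⟪u₁, u₂⟫| ≤ ‖u₁‖ * ‖u₂‖ := abs_real_inner_le_norm u₁ u₂
          _ = 1 := by rw [hn1, hn2, mul_one]
      have hmem : |⟪‖v₁‖⁻¹ • v₁, ‖a‖⁻¹ • a⟫| ∈ {r : ℝ | ∃ u₁ u₂ : H, u₁ ∈ V₁ ∧ u₂ ∈ V₂ ∧
          ‖u₁‖ = 1 ∧ ‖u₂‖ = 1 ∧ u₁ ∈ (V₁ ⊓ V₂)ᗮ ∧ u₂ ∈ (V₁ ⊓ V₂)ᗮ ∧ r = |⟪u₁, u₂⟫|} := by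
        refine ⟨‖v₁‖⁻¹ • v₁, ‖a‖⁻¹ • a, Submodule.smul_mem _ _ hv₁,
          Submodule.smul_mem _ _ (Submodule.orthogonalProjection V₂ v₁).2, ?_, ?_,
          Submodule.smul_mem _ _ hperp, Submodule.smul_mem _ _ haperp, rfl⟩
        · rw [norm_smul, norm_inv, norm_norm, inv_mul_cancel₀ hv₁pos.ne']
        · rw [norm_smul, norm_inv, norm_norm, inv_mul_cancel₀ hapos.ne']
      have hle : |⟪‖v₁‖⁻¹ • v₁, ‖a‖⁻¹ • a⟫| ≤ Real.cos α := by
        rw [hcos]; exact le_csSup hbdd hmem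
      rw [real_inner_smul_left, real_inner_smul_right, hinner] at hle
      rw [abs_of_nonneg (by positivity)] at hle
      have : ‖v₁‖⁻¹ * ‖a‖ ≤ Real.cos α := by
        have h2 : ‖a‖ ^ 2 = ‖a‖ * ‖a‖ := sq ‖a‖
        calc ‖v₁‖⁻¹ * ‖a‖ = ‖v₁‖⁻¹ * (‖a‖⁻¹ * ‖a‖ ^ 2) := by
              field_simp
            _ ≤ Real.cos α := hle
      calc ‖a‖ = ‖v₁‖ * (‖v₁‖⁻¹ * ‖a‖) := by field_simp
        _ ≤ ‖v₁‖ * Real.cos α := by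
            exact mul_le_mul_of_nonneg_left this hv₁pos.le
        _ = Real.cos α * ‖v₁‖ := mul_comm _ _
  -- Pythagoras
  have hsum : a + b = v₁ := by
    rw [ha, hb]
    exact Submodule.starProjection_add_starProjection_orthogonal (K := V₂) v₁
  have hab : ⟪a, b⟫ = 0 := (Submodule.orthogonalProjection V₂ᗮ v₁).2 a (Submodule.orthogonalProjection V₂ v₁).2
  have hpyth : ‖v₁‖ ^ 2 = ‖a‖ ^ 2 + ‖b‖ ^ 2 := by
    have hab' : ⟪b, a⟫ = 0 := by rw [real_inner_comm]; exact hab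
    rw [← hsum, ← real_inner_self_eq_norm_sq, inner_add_add_self, hab, hab',
      real_inner_self_eq_norm_sq, real_inner_self_eq_norm_sq]
    ring
  have hsq : (‖v₁‖ * Real.sin α) ^ 2 ≤ ‖b‖ ^ 2 := by
    have hsc : Real.sin α ^ 2 = 1 - Real.cos α ^ 2 := by
      have := Real.sin_sq_add_cos_sq α; linarith
    have h1 : ‖a‖ ^ 2 ≤ (Real.cos α * ‖v₁‖) ^ 2 := by
      have := mul_le_mul hkey hkey (norm_nonneg a) (by positivity)
      calc ‖a‖ ^ 2 = ‖a‖ * ‖a‖ := sq ‖a‖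
        _ ≤ (Real.cos α * ‖v₁‖) * (Real.cos α * ‖v₁‖) := this
        _ = (Real.cos α * ‖v₁‖) ^ 2 := (sq _).symm
    nlinarith [hpyth]
  calc ‖v₁‖ * Real.sin α = Real.sqrt ((‖v₁‖ * Real.sin α) ^ 2) :=
        (Real.sqrt_sq (by positivity)).symm
    _ ≤ Real.sqrt (‖b‖ ^ 2) := Real.sqrt_le_sqrt hsq
    _ = ‖b‖ := Real.sqrt_sq (norm_nonneg b)
end

section
/- If V₁ is a finite-dimensional subspace and V₂ a closed subspace of a Hilbert space, then the Friedrichs angle between V₁ and V₂ is strictly positive; i.e., cos ∠(V₁,V₂) < 1. -/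
open scoped RealInnerProductSpace

theorem friedrichsCos_lt_one_of_finiteDimensional
    {H : Type*} [NormedAddCommGroup H] [InnerProductSpace ℝ H] [CompleteSpace H]
    (V₁ V₂ : Submodule ℝ H) [FiniteDimensional ℝ V₁] (hV₂ : IsClosed (V₂ : Set H))
    (h12 : ¬ V₁ ≤ V₂) (h21 : ¬ V₂ ≤ V₁) :
    friedrichsCos V₁ V₂ < 1 := by
  classical
  set D := V₁ ⊓ V₂ with hDdef
  set W := V₂ ⊓ Dᗮ with hWdef
  haveI : FiniteDimensional ℝ D := Submodule.finiteDimensional_of_le inf_le_left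
  have hWclosed : IsClosed (W : Set H) := by
    have h1 : IsClosed ((Dᗮ : Submodule ℝ H) : Set H) := Submodule.isClosed_orthogonal D
    simpa [hWdef, Submodule.coe_inf] using hV₂.inter h1
  haveI : CompleteSpace W := hWclosed.completeSpace_coe
  set U := V₁ ⊓ Dᗮ with hUdef
  haveI : FiniteDimensional ℝ U := Submodule.finiteDimensional_of_le inf_le_left
  set K : Set H := (Subtype.val '' (Metric.sphere (0 : U) 1)) with hKdef
  have hKmem : ∀ v : H, v ∈ K ↔ v ∈ V₁ ∧ v ∈ Dᗮ ∧ ‖v‖ = 1 := by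
    intro v
    constructor
    · rintro ⟨u, hu, rfl⟩
      rw [mem_sphere_zero_iff_norm] at hu
      exact ⟨u.2.1, u.2.2, hu⟩
    · rintro ⟨h1, h2, h3⟩
      refine ⟨⟨v, ⟨h1, h2⟩⟩, ?_, rfl⟩
      rw [mem_sphere_zero_iff_norm]
      exact h3
  -- K is compact and nonempty
  have hKcomp : IsCompact K := (isCompact_sphere (0 : U) 1).image continuous_subtype_val
  have hKne : K.Nonempty := by
    obtain ⟨x, hxV₁, hxV₂⟩ : ∃ x, x ∈ V₁ ∧ x ∉ V₂ := by
      by_contra h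
      push_neg at h
      exact h12 h
    set p : H := (Submodule.orthogonalProjectionOnto D x : H) with hpdef
    have hpD : p ∈ D := (Submodule.orthogonalProjectionOnto D x).2
    have hy1 : x - p ∈ V₁ := V₁.sub_mem hxV₁ hpD.1
    have hy2 : x - p ∈ Dᗮ := Submodule.sub_starProjection_mem_orthogonal x
    have hyne : x - p ≠ 0 := by
      intro h
      have : x = p := by linear_combination (norm := module) h
      exact hxV₂ (this ▸ hpD.2)
    have hn : ‖x - p‖ ≠ 0 := norm_ne_zero_iff.mpr hyne
    refine ⟨‖x - p‖⁻¹ • (x - p), (hKmem _).2 ⟨V₁.smul_mem _ hy1, Dᗮ.smul_mem _ hy2, ?_⟩⟩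
    rw [norm_smul]
    simp [hn, abs_of_nonneg (inv_nonneg.mpr (norm_nonneg _))]
  clear h12 h21
  -- the function
  set g : H → ℝ := fun v => ‖(Submodule.orthogonalProjectionOnto W v : H)‖ with hgdef
  have hgcont : Continuous g := by
    exact continuous_norm.comp (continuous_subtype_val.comp (Submodule.orthogonalProjectionOnto W).continuous)
  obtain ⟨v₀, hv₀K, hv₀max⟩ := hKcomp.exists_isMaxOn hKne hgcont.continuousOn
  obtain ⟨hv₀V₁, hv₀D, hv₀n⟩ := (hKmem v₀).1 hv₀K
  set c : ℝ := g v₀ with hcdef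
  -- Pythagoras
  have pyth : ∀ v : H, ‖v‖ ^ 2 = ‖(Submodule.orthogonalProjectionOnto W v : H)‖ ^ 2
      + ‖v - Submodule.orthogonalProjectionOnto W v‖ ^ 2 := by
    intro v
    have horth : ⟪(Submodule.orthogonalProjectionOnto W v : H), v - Submodule.orthogonalProjectionOnto W v⟫ = 0 :=
      (Submodule.sub_starProjection_mem_orthogonal v) _ (Submodule.orthogonalProjectionOnto W v).2
    have := norm_add_sq_real (Submodule.orthogonalProjectionOnto W v : H) (v - Submodule.orthogonalProjectionOnto W v)
    rw [horth] at this
    simpa using this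
  have hc1 : c ≤ 1 := by
    have h := pyth v₀
    nlinarith [norm_nonneg (v₀ - (Submodule.orthogonalProjectionOnto W v₀ : H)), norm_nonneg ((Submodule.orthogonalProjectionOnto W v₀ : H)), hv₀n]
  have hcne : c < 1 := by
    rcases lt_or_eq_of_le hc1 with h | h
    · exact h
    · exfalso
      have h2 := pyth v₀
      have hz : ‖v₀ - (Submodule.orthogonalProjectionOnto W v₀ : H)‖ = 0 := by
        nlinarith [norm_nonneg (v₀ - (Submodule.orthogonalProjectionOnto W v₀ : H))]
      have hv₀W : v₀ ∈ W := by
        have : v₀ = (Submodule.orthogonalProjectionOnto W v₀ : H) := by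
          have := norm_eq_zero.mp hz
          linear_combination (norm := module) this
        rw [this]; exact (Submodule.orthogonalProjectionOnto W v₀).2
      have : v₀ ∈ D := ⟨hv₀V₁, hv₀W.1⟩
      have hzero : v₀ = 0 := by
        have := hv₀D v₀ this
        have : v₀ = 0 := by simpa [real_inner_comm] using this
        exact this
      rw [hzero] at hv₀n
      simp at hv₀n
  have hc0 : 0 ≤ c := norm_nonneg _
  have hle : friedrichsCos V₁ V₂ ≤ c := by
    apply Real.sSup_le _ hc0
    rintro r ⟨v₁, v₂, hv₁, hv₂, hn₁, hn₂, ho₁, ho₂, rfl⟩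
    have hv₂W : v₂ ∈ W := ⟨hv₂, ho₂⟩
    have hsplit : ⟪v₁, v₂⟫ = ⟪(Submodule.orthogonalProjectionOnto W v₁ : H), v₂⟫ := by
      have horth : ⟪v₂, v₁ - Submodule.orthogonalProjectionOnto W v₁⟫ = 0 :=
        (Submodule.sub_starProjection_mem_orthogonal v₁) v₂ hv₂W
      have : ⟪v₁ - (Submodule.orthogonalProjectionOnto W v₁ : H), v₂⟫ = 0 := by
        rwa [real_inner_comm]
      have hsub := inner_sub_left (𝕜 := ℝ) v₁ (Submodule.orthogonalProjectionOnto W v₁ : H) v₂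
      linarith [hsub ▸ this]
    rw [hsplit]
    calc |⟪(Submodule.orthogonalProjectionOnto W v₁ : H), v₂⟫|
        ≤ ‖(Submodule.orthogonalProjectionOnto W v₁ : H)‖ * ‖v₂‖ := abs_real_inner_le_norm _ _
      _ = g v₁ := by rw [hn₂]; ring
      _ ≤ c := hv₀max ((hKmem v₁).2 ⟨hv₁, ho₁, hn₁⟩)
  exact lt_of_le_of_lt hle hcne
end

section
/- For closed subspaces V₁, V₂ of a Hilbert space, the Friedrichs angle between the orthogonal complements V₁^⊥ and V₂^⊥ equals the Friedrichs angle between V₁ and V₂. -/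
open scoped RealInnerProductSpace

namespace FriedrichsAux

variable {H : Type*} [NormedAddCommGroup H] [InnerProductSpace ℝ H]

lemma mem_le_one {V₁ V₂ : Submodule ℝ H} :
    ∀ r ∈ {r : ℝ | ∃ v₁ v₂ : H, v₁ ∈ V₁ ∧ v₂ ∈ V₂ ∧ ‖v₁‖ = 1 ∧ ‖v₂‖ = 1 ∧
      v₁ ∈ (V₁ ⊓ V₂)ᗮ ∧ v₂ ∈ (V₁ ⊓ V₂)ᗮ ∧ r = |⟪v₁, v₂⟫|}, r ≤ 1 := by
  rintro r ⟨a, b, -, -, ha, hb, -, -, rfl⟩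
  calc |⟪a, b⟫| ≤ ‖a‖ * ‖b‖ := abs_real_inner_le_norm a b
    _ = 1 := by rw [ha, hb, mul_one]

lemma cos_nonneg (V₁ V₂ : Submodule ℝ H) : 0 ≤ friedrichsCos V₁ V₂ := by
  apply Real.sSup_nonneg
  rintro r ⟨a, b, -, -, -, -, -, -, rfl⟩
  positivity

lemma cos_le_one (V₁ V₂ : Submodule ℝ H) : friedrichsCos V₁ V₂ ≤ 1 :=
  Real.sSup_le mem_le_one one_pos.le

/-- The scaled fundamental inequality from the definition of the Friedrichs cosine. -/
lemma inner_le {V₁ V₂ : Submodule ℝ H} {a b : H} (ha : a ∈ V₁) (hb : b ∈ V₂)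
    (ha' : a ∈ (V₁ ⊓ V₂)ᗮ) (hb' : b ∈ (V₁ ⊓ V₂)ᗮ) :
    |⟪a, b⟫| ≤ friedrichsCos V₁ V₂ * (‖a‖ * ‖b‖) := by
  rcases eq_or_ne a 0 with rfl | ha0
  · simp only [inner_zero_left, abs_zero, norm_zero, zero_mul, mul_zero]
    exact le_rfl
  rcases eq_or_ne b 0 with rfl | hb0
  · simp only [inner_zero_right, abs_zero, norm_zero, mul_zero]
    exact le_rfl
  have hna : (0:ℝ) < ‖a‖ := norm_pos_iff.2 ha0
  have hnb : (0:ℝ) < ‖b‖ := norm_pos_iff.2 hb0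
  set a' := ‖a‖⁻¹ • a with ha'def
  set b' := ‖b‖⁻¹ • b with hb'def
  have hna' : ‖a'‖ = 1 := by
    rw [ha'def, norm_smul, norm_inv, norm_norm, inv_mul_cancel₀ hna.ne']
  have hnb' : ‖b'‖ = 1 := by
    rw [hb'def, norm_smul, norm_inv, norm_norm, inv_mul_cancel₀ hnb.ne']
  have hmem : |⟪a', b'⟫| ∈ {r : ℝ | ∃ v₁ v₂ : H, v₁ ∈ V₁ ∧ v₂ ∈ V₂ ∧ ‖v₁‖ = 1 ∧ ‖v₂‖ = 1 ∧
      v₁ ∈ (V₁ ⊓ V₂)ᗮ ∧ v₂ ∈ (V₁ ⊓ V₂)ᗮ ∧ |⟪a', b'⟫| = |⟪v₁, v₂⟫|} := by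
    exact ⟨a', b', V₁.smul_mem _ ha, V₂.smul_mem _ hb, hna', hnb',
      Submodule.smul_mem _ _ ha', Submodule.smul_mem _ _ hb', rfl⟩
  have hle : |⟪a', b'⟫| ≤ friedrichsCos V₁ V₂ :=
    le_csSup ⟨1, fun r hr => mem_le_one r hr⟩ hmem
  have hab : |⟪a', b'⟫| = ‖a‖⁻¹ * (‖b‖⁻¹ * |⟪a, b⟫|) := by
    rw [ha'def, hb'def, real_inner_smul_left, real_inner_smul_right, abs_mul, abs_mul,
      abs_of_pos (inv_pos.2 hna), abs_of_pos (inv_pos.2 hnb)]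
  rw [hab] at hle
  have h := mul_le_mul_of_nonneg_left hle (le_of_lt (mul_pos hna hnb))
  calc |⟪a, b⟫| = ‖a‖ * ‖b‖ * (‖a‖⁻¹ * (‖b‖⁻¹ * |⟪a, b⟫|)) := by
        field_simp
    _ ≤ ‖a‖ * ‖b‖ * friedrichsCos V₁ V₂ := h
    _ = friedrichsCos V₁ V₂ * (‖a‖ * ‖b‖) := by ring

/-- Master inequality: if `u, v` are unit vectors orthogonal to `M`, `N` respectively, and
`u` lies in `(Mᗮ ⊓ Nᗮ)ᗮ` (the closure of `M ⊔ N`), then `|⟪u,v⟫|` is at most the Friedrichs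
cosine of `M` and `N`. -/
lemma key [CompleteSpace H] (M N : Submodule ℝ H) (hM : IsClosed (M : Set H))
    (hN : IsClosed (N : Set H)) {u v : H} (hu : u ∈ Mᗮ) (hv : v ∈ Nᗮ)
    (hu1 : ‖u‖ = 1) (hv1 : ‖v‖ = 1) (huE : u ∈ (Mᗮ ⊓ Nᗮ)ᗮ) :
    |⟪u, v⟫| ≤ friedrichsCos M N := by
  set c := friedrichsCos M N with hcdef
  have hc0 : 0 ≤ c := cos_nonneg M N
  have hc1 : c ≤ 1 := cos_le_one M N
  by_cases hcirrel : 1 ≤ c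
  · calc |⟪u, v⟫| ≤ ‖u‖ * ‖v‖ := abs_real_inner_le_norm u v
      _ = 1 := by rw [hu1, hv1, mul_one]
      _ ≤ c := hcirrel
  push_neg at hcirrel
  set γ := Real.sqrt (1 - c ^ 2) with hγdef
  have hγpos : 0 < γ := Real.sqrt_pos.2 (by nlinarith)
  have hγsq : γ ^ 2 = 1 - c ^ 2 := Real.sq_sqrt (by nlinarith)
  set L := M ⊓ N with hLdef
  have hLclosed : IsClosed (L : Set H) := hM.inter hN
  haveI : CompleteSpace L := hLclosed.completeSpace_coe
  set A := M ⊓ Lᗮ with hAdef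
  set B := N ⊓ Lᗮ with hBdef
  have hBclosed : IsClosed (B : Set H) := hN.inter L.isClosed_orthogonal
  haveI : CompleteSpace B := hBclosed.completeSpace_coe
  set w : H := (Submodule.orthogonalProjectionOnto B u : H) with hwdef
  have hwB : w ∈ B := (Submodule.orthogonalProjectionOnto B u).2
  have huwB : u - w ∈ Bᗮ := Submodule.sub_starProjection_mem_orthogonal (K := B) u
  -- u is orthogonal to L
  have huL : u ∈ Lᗮ := Submodule.orthogonal_le inf_le_left hu
  -- u lies in the closure of M ⊔ N
  have huMN : u ∈ closure ((M ⊔ N : Submodule ℝ H) : Set H) := by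
    have h1 : (Mᗮ ⊓ Nᗮ) = (M ⊔ N)ᗮ := (Submodule.inf_orthogonal M N)
    have h2 : (Mᗮ ⊓ Nᗮ)ᗮ = (M ⊔ N).topologicalClosure := by
      rw [h1, Submodule.orthogonal_orthogonal_eq_closure]
    rw [h2] at huE
    rwa [← SetLike.mem_coe, Submodule.topologicalClosure_coe] at huE
  -- project M ⊔ N onto A ⊔ B
  set f : H →L[ℝ] H := ContinuousLinearMap.id ℝ H - L.subtypeL.comp (Submodule.orthogonalProjectionOnto L)
    with hfdef
  have hfx : ∀ x : H, f x = x - (Submodule.orthogonalProjectionOnto L x : H) := fun x => rfl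
  have hfu : f u = u := by
    rw [hfx, Submodule.orthogonalProjectionOnto_apply_of_mem_orthogonal huL]
    simp
  have hmaps : Set.MapsTo f ((M ⊔ N : Submodule ℝ H) : Set H)
      ((A ⊔ B : Submodule ℝ H) : Set H) := by
    intro x hx
    obtain ⟨m, hm, n, hn, rfl⟩ := Submodule.mem_sup.1 hx
    have hfm : f m ∈ A := by
      rw [hfx]
      exact ⟨sub_mem hm (inf_le_left (α := Submodule ℝ H)
        (Submodule.orthogonalProjectionOnto L m).2 : (Submodule.orthogonalProjectionOnto L m : H) ∈ M),
        Submodule.sub_starProjection_mem_orthogonal (K := L) m⟩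
    have hfn : f n ∈ B := by
      rw [hfx]
      exact ⟨sub_mem hn (inf_le_right (α := Submodule ℝ H)
        (Submodule.orthogonalProjectionOnto L n).2 : (Submodule.orthogonalProjectionOnto L n : H) ∈ N),
        Submodule.sub_starProjection_mem_orthogonal (K := L) n⟩
    have : f (m + n) = f m + f n := map_add f m n
    rw [this]
    exact Submodule.add_mem_sup hfm hfn
  have huAB : u ∈ closure ((A ⊔ B : Submodule ℝ H) : Set H) := by
    have := map_mem_closure f.continuous huMN hmaps
    rwa [hfu] at this
  -- pointwise bound on A ⊔ B
  have hbound : ∀ x ∈ ((A ⊔ B : Submodule ℝ H) : Set H), |⟪u, x⟫| ≤ ‖w‖ / γ * ‖x‖ := by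
    intro x hx
    obtain ⟨a, haA, b, hbB, rfl⟩ := Submodule.mem_sup.1 hx
    have hab : |⟪a, b⟫| ≤ c * (‖a‖ * ‖b‖) := inner_le haA.1 hbB.1 haA.2 hbB.2
    have hnormb : γ * ‖b‖ ≤ ‖a + b‖ := by
      have hsq : ‖a + b‖ ^ 2 = ‖a‖ ^ 2 + 2 * ⟪a, b⟫ + ‖b‖ ^ 2 := norm_add_sq_real a b
      have habs : -(c * (‖a‖ * ‖b‖)) ≤ ⟪a, b⟫ := neg_le_of_abs_le hab
      have h2 : (γ * ‖b‖) ^ 2 ≤ ‖a + b‖ ^ 2 := by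
        nlinarith [sq_nonneg (‖a‖ - c * ‖b‖), norm_nonneg a, norm_nonneg b, hγsq]
      nlinarith [norm_nonneg (a + b), mul_nonneg hγpos.le (norm_nonneg b), h2]
    have hua : ⟪u, a⟫ = 0 := by
      have := (Submodule.mem_orthogonal M u).1 hu a haA.1
      rwa [real_inner_comm] at this
    have hub : ⟪u, b⟫ = ⟪w, b⟫ := by
      have h0 : ⟪u - w, b⟫ = 0 := by
        have := (Submodule.mem_orthogonal B (u - w)).1 huwB b hbB
        rwa [real_inner_comm] at this
      have := inner_sub_left (𝕜 := ℝ) u w b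
      rw [h0] at this
      linarith [this]
    have hx1 : ⟪u, a + b⟫ = ⟪w, b⟫ := by rw [inner_add_right, hua, hub, zero_add]
    rw [hx1]
    have hb' : ‖b‖ ≤ ‖a + b‖ / γ := (le_div_iff₀ hγpos).2 (by linarith [hnormb])
    calc |⟪w, b⟫| ≤ ‖w‖ * ‖b‖ := abs_real_inner_le_norm w b
      _ ≤ ‖w‖ * (‖a + b‖ / γ) := mul_le_mul_of_nonneg_left hb' (norm_nonneg w)
      _ = ‖w‖ / γ * ‖a + b‖ := by ring
  -- pass to the closure
  have hsetclosed : IsClosed {x : H | |⟪u, x⟫| ≤ ‖w‖ / γ * ‖x‖} := by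
    apply isClosed_le
    · exact (continuous_const.inner continuous_id).abs
    · exact continuous_const.mul continuous_norm
  have husub : u ∈ {x : H | |⟪u, x⟫| ≤ ‖w‖ / γ * ‖x‖} :=
    closure_minimal hbound hsetclosed huAB
  have huu : |⟪u, u⟫| ≤ ‖w‖ / γ := by
    have := husub
    rw [Set.mem_setOf_eq, hu1, mul_one] at this
    exact this
  have huu1 : ⟪u, u⟫ = 1 := by
    rw [real_inner_self_eq_norm_sq, hu1, one_pow]
  rw [huu1, abs_one] at huu
  have hwγ : γ ≤ ‖w‖ := by
    have := (le_div_iff₀ hγpos).1 huu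
    linarith
  -- final estimate
  have hwv : ⟪w, v⟫ = 0 := (Submodule.mem_orthogonal N v).1 hv w hwB.1
  have huv : ⟪u, v⟫ = ⟪u - w, v⟫ := by rw [inner_sub_left, hwv, sub_zero]
  have huw0 : ⟪u - w, w⟫ = 0 := by
    have := (Submodule.mem_orthogonal B (u - w)).1 huwB w hwB
    rwa [real_inner_comm] at this
  have hnormuw : ‖u - w‖ ^ 2 = 1 - ‖w‖ ^ 2 := by
    have h1 : ‖u - w‖ ^ 2 = ‖u‖ ^ 2 - 2 * ⟪u, w⟫ + ‖w‖ ^ 2 := norm_sub_sq_real u w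
    have h2 : ⟪u, w⟫ = ‖w‖ ^ 2 := by
      have := inner_sub_left (𝕜 := ℝ) u w w
      rw [huw0] at this
      have h3 : ⟪w, w⟫ = ‖w‖ ^ 2 := real_inner_self_eq_norm_sq w
      linarith [this]
    rw [h1, h2, hu1]
    ring
  have hfinal : ‖u - w‖ ≤ c := by
    have h1 : ‖u - w‖ ^ 2 ≤ c ^ 2 := by
      rw [hnormuw]
      nlinarith [hγsq, hwγ, hγpos]
    nlinarith [norm_nonneg (u - w)]
  calc |⟪u, v⟫| = |⟪u - w, v⟫| := by rw [huv]
    _ ≤ ‖u - w‖ * ‖v‖ := abs_real_inner_le_norm _ _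
    _ = ‖u - w‖ := by rw [hv1, mul_one]
    _ ≤ c := hfinal

/-- One-sided inequality between Friedrichs cosines. -/
lemma cos_orth_le [CompleteSpace H] (M N : Submodule ℝ H) (hM : IsClosed (M : Set H))
    (hN : IsClosed (N : Set H)) :
    friedrichsCos Mᗮ Nᗮ ≤ friedrichsCos M N := by
  apply Real.sSup_le _ (cos_nonneg M N)
  rintro r ⟨u, v, hu, hv, hu1, hv1, huE, hvE, rfl⟩
  exact key M N hM hN hu hv hu1 hv1 huE

end FriedrichsAux

theorem friedrichsCos_orthogonal_complements
    {H : Type*} [NormedAddCommGroup H] [InnerProductSpace ℝ H] [CompleteSpace H]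
    (V₁ V₂ : Submodule ℝ H) (hV₁ : IsClosed (V₁ : Set H)) (hV₂ : IsClosed (V₂ : Set H)) :
    friedrichsCos V₁ᗮ V₂ᗮ = friedrichsCos V₁ V₂ := by
  haveI : CompleteSpace V₁ := hV₁.completeSpace_coe
  haveI : CompleteSpace V₂ := hV₂.completeSpace_coe
  refine le_antisymm (FriedrichsAux.cos_orth_le V₁ V₂ hV₁ hV₂) ?_
  have h := FriedrichsAux.cos_orth_le V₁ᗮ V₂ᗮ V₁.isClosed_orthogonal V₂.isClosed_orthogonal
  rwa [V₁.orthogonal_orthogonal, V₂.orthogonal_orthogonal] at h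
end

section
/- The point 2 lies in the point spectrum (is an eigenvalue) of Σ = S*S, where S : V₁ ⊕ V₂ → H is the addition operator, if and only if V₁ ∩ V₂ ≠ {0}. The eigenspace of Σ for eigenvalue 2 is { (v,v) : v ∈ V₁ ∩ V₂ } and the eigenspace for eigenvalue 0 contains { (v,−v) : v ∈ V₁ ∩ V₂ }. -/
open scoped RealInnerProductSpace

theorem eigenvalue_two_iff_nontrivial_intersection
    {H : Type*} [NormedAddCommGroup H] [InnerProductSpace ℝ H] [CompleteSpace H]
    (V₁ V₂ : Submodule ℝ H) (hV₁ : IsClosed (V₁ : Set H)) (hV₂ : IsClosed (V₂ : Set H))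
    [CompleteSpace V₁] [CompleteSpace V₂]
    (S : WithLp 2 (V₁ × V₂) →L[ℝ] H)
    (hS : ∀ p : WithLp 2 (V₁ × V₂), S p = (p.ofLp.1 : H) + (p.ofLp.2 : H)) :
    (Module.End.HasEigenvalue
        ((ContinuousLinearMap.adjoint S ∘L S : WithLp 2 (V₁ × V₂) →L[ℝ] WithLp 2 (V₁ × V₂))
          : WithLp 2 (V₁ × V₂) →ₗ[ℝ] WithLp 2 (V₁ × V₂)) 2 ↔ V₁ ⊓ V₂ ≠ ⊥) ∧
    (∀ p : WithLp 2 (V₁ × V₂),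
      p ∈ Module.End.eigenspace
        ((ContinuousLinearMap.adjoint S ∘L S : WithLp 2 (V₁ × V₂) →L[ℝ] WithLp 2 (V₁ × V₂))
          : WithLp 2 (V₁ × V₂) →ₗ[ℝ] WithLp 2 (V₁ × V₂)) 2 ↔
        ∃ v : H, ∃ h₁ : v ∈ V₁, ∃ h₂ : v ∈ V₂, (p.ofLp.1 : H) = v ∧ (p.ofLp.2 : H) = v) ∧
    (∀ v : H, ∀ h₁ : v ∈ V₁, ∀ h₂ : v ∈ V₂,
      WithLp.toLp 2 ((⟨v, h₁⟩, -⟨v, h₂⟩) : V₁ × V₂) ∈ Module.End.eigenspace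
        ((ContinuousLinearMap.adjoint S ∘L S : WithLp 2 (V₁ × V₂) →L[ℝ] WithLp 2 (V₁ × V₂))
          : WithLp 2 (V₁ × V₂) →ₗ[ℝ] WithLp 2 (V₁ × V₂)) 0) := by
  set T := (ContinuousLinearMap.adjoint S ∘L S : WithLp 2 (V₁ × V₂) →L[ℝ] WithLp 2 (V₁ × V₂))
    with hTdef
  have hTq : ∀ p q : WithLp 2 (V₁ × V₂),
      ⟪T p, q⟫ = ⟪(p.ofLp.1 : H) + (p.ofLp.2 : H), (q.ofLp.1 : H) + (q.ofLp.2 : H)⟫ := by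
    intro p q
    rw [hTdef, ContinuousLinearMap.comp_apply, ContinuousLinearMap.adjoint_inner_left,
      hS p, hS q]
  have hpq : ∀ p q : WithLp 2 (V₁ × V₂),
      ⟪p, q⟫ = ⟪(p.ofLp.1 : H), (q.ofLp.1 : H)⟫ + ⟪(p.ofLp.2 : H), (q.ofLp.2 : H)⟫ := by
    intro p q
    rw [WithLp.prod_inner_apply, Submodule.coe_inner, Submodule.coe_inner]
  -- Part 2 : the eigenspace of 2
  have key2 : ∀ p : WithLp 2 (V₁ × V₂),
      p ∈ Module.End.eigenspace (T : WithLp 2 (V₁ × V₂) →ₗ[ℝ] WithLp 2 (V₁ × V₂)) 2 ↔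
        ∃ v : H, ∃ h₁ : v ∈ V₁, ∃ h₂ : v ∈ V₂, (p.ofLp.1 : H) = v ∧ (p.ofLp.2 : H) = v := by
    intro p
    rw [Module.End.mem_eigenspace_iff]
    constructor
    · intro h
      have h1 : ⟪T p, p⟫ = ⟪(2 : ℝ) • p, p⟫ := by
        rw [show (T : WithLp 2 (V₁ × V₂) →ₗ[ℝ] WithLp 2 (V₁ × V₂)) p = T p from rfl] at h
        rw [h]
      rw [hTq, real_inner_smul_left, hpq] at h1
      have h2 : ⟪(p.ofLp.1 : H) - (p.ofLp.2 : H), (p.ofLp.1 : H) - (p.ofLp.2 : H)⟫ = 0 := by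
        simp only [inner_add_left, inner_add_right, inner_sub_left, inner_sub_right] at h1 ⊢
        have := real_inner_comm (p.ofLp.1 : H) (p.ofLp.2 : H)
        linarith
      have h3 : (p.ofLp.1 : H) = (p.ofLp.2 : H) := by
        have := inner_self_eq_zero.mp h2
        exact sub_eq_zero.mp this
      exact ⟨(p.ofLp.1 : H), p.ofLp.1.2, h3 ▸ p.ofLp.2.2, rfl, h3.symm⟩
    · rintro ⟨v, h₁, h₂, hv1, hv2⟩
      refine ext_inner_right ℝ fun q => ?_
      rw [show ((T : WithLp 2 (V₁ × V₂) →ₗ[ℝ] WithLp 2 (V₁ × V₂)) p) = T p from rfl]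
      rw [hTq, real_inner_smul_left, hpq, hv1, hv2]
      simp only [inner_add_left, inner_add_right]
      ring
  refine ⟨?_, key2, ?_⟩
  · rw [Module.End.hasEigenvalue_iff]
    constructor
    · intro h
      obtain ⟨p, hp, hp0⟩ := Submodule.ne_bot_iff _ |>.mp h
      obtain ⟨v, h₁, h₂, hv1, hv2⟩ := (key2 p).mp hp
      rw [Submodule.ne_bot_iff]
      refine ⟨v, ⟨h₁, h₂⟩, fun hv => hp0 ?_⟩
      have e1 : p.ofLp.1 = 0 := Subtype.ext (by rw [hv1, hv]; rfl)
      have e2 : p.ofLp.2 = 0 := Subtype.ext (by rw [hv2, hv]; rfl)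
      show p = (0 : WithLp 2 (V₁ × V₂))
      have : p = WithLp.toLp 2 (p.ofLp.1, p.ofLp.2) := rfl
      rw [this, e1, e2]; rfl
    · intro h
      obtain ⟨v, ⟨h₁, h₂⟩, hv0⟩ := Submodule.ne_bot_iff _ |>.mp h
      rw [Submodule.ne_bot_iff]
      refine ⟨WithLp.toLp 2 ((⟨v, h₁⟩, ⟨v, h₂⟩) : V₁ × V₂), (key2 _).mpr ⟨v, h₁, h₂, rfl, rfl⟩, fun hp => ?_⟩
      apply hv0
      have : (WithLp.toLp 2 ((⟨v, h₁⟩, ⟨v, h₂⟩) : V₁ × V₂)).ofLp.1 = (0 : V₁) := by rw [hp]; rfl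
      exact congrArg Subtype.val this
  · intro v h₁ h₂
    rw [Module.End.mem_eigenspace_iff]
    have h0 : T (WithLp.toLp 2 ((⟨v, h₁⟩, -⟨v, h₂⟩) : V₁ × V₂)) = (0 : ℝ) • WithLp.toLp 2 ((⟨v, h₁⟩, -⟨v, h₂⟩) : V₁ × V₂) := by
      refine ext_inner_right (𝕜 := ℝ) fun q => ?_
      rw [hTq]
      simp
    exact h0
end

section
/- Let V₁, V₂ be closed subspaces of a Hilbert space H with cos ∠(V₁,V₂) = ε < 1 (Friedrichs angle). For any w ∈ H, if d₀(w), d₁(w), d₂(w) denote the distances from w to V₁ ∩ V₂, V₁, V₂ respectively, then d₀(w)² ≤ (1/(1−ε)) (d₁(w)² + d₂(w)²). -/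
set_option maxHeartbeats 1000000


open scoped RealInnerProductSpace

/-- infDist to a closed submodule equals the norm of the difference with the
orthogonal projection. -/
lemma infDist_eq_norm_sub_proj {H : Type*} [NormedAddCommGroup H] [InnerProductSpace ℝ H]
    (V : Submodule ℝ H) [V.HasOrthogonalProjection] (w : H) :
    Metric.infDist w (V : Set H) = ‖w - Submodule.orthogonalProjectionOnto V w‖ := by
  apply le_antisymm
  · have := Metric.infDist_le_dist_of_mem
      (x := w) (y := (Submodule.orthogonalProjectionOnto V w : H)) (Submodule.orthogonalProjectionOnto V w).2
    simpa [dist_eq_norm] using this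
  · rw [Metric.infDist_eq_iInf]
    refine le_ciInf ?_
    rintro ⟨y, hy⟩
    have h1 : ‖w - Submodule.orthogonalProjectionOnto V w‖ ≤ ‖w - y‖ := by
      rw [← Submodule.starProjection_apply, Submodule.starProjection_minimal]
      exact ciInf_le ⟨0, by rintro r ⟨z, rfl⟩; positivity⟩ (⟨y, hy⟩ : V)
    simpa [dist_eq_norm] using h1

lemma friedrichsCos_nonneg {H : Type*} [NormedAddCommGroup H] [InnerProductSpace ℝ H]
    (V₁ V₂ : Submodule ℝ H) : 0 ≤ friedrichsCos V₁ V₂ := by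
  unfold friedrichsCos
  set S := {r : ℝ | ∃ v₁ v₂ : H, v₁ ∈ V₁ ∧ v₂ ∈ V₂ ∧ ‖v₁‖ = 1 ∧ ‖v₂‖ = 1 ∧
    v₁ ∈ (V₁ ⊓ V₂)ᗮ ∧ v₂ ∈ (V₁ ⊓ V₂)ᗮ ∧ r = |⟪v₁, v₂⟫|} with hS
  rcases Set.eq_empty_or_nonempty S with h | h
  · simp [h]
  · obtain ⟨r, hr⟩ := h
    have hb : BddAbove S := by
      refine ⟨1, ?_⟩
      rintro s ⟨v₁, v₂, -, -, h1, h2, -, -, rfl⟩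
      calc |⟪v₁, v₂⟫| ≤ ‖v₁‖ * ‖v₂‖ := abs_real_inner_le_norm v₁ v₂
        _ = 1 := by rw [h1, h2]; ring
    have hr' := hr
    obtain ⟨v₁, v₂, -, -, -, -, -, -, rfl⟩ := hr'
    exact le_trans (abs_nonneg _) (le_csSup hb hr)

lemma abs_inner_le_friedrichsCos {H : Type*} [NormedAddCommGroup H] [InnerProductSpace ℝ H]
    (V₁ V₂ : Submodule ℝ H) {x y : H} (hx : x ∈ V₁) (hy : y ∈ V₂)
    (hx0 : x ∈ (V₁ ⊓ V₂)ᗮ) (hy0 : y ∈ (V₁ ⊓ V₂)ᗮ) :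
    |⟪x, y⟫| ≤ friedrichsCos V₁ V₂ * (‖x‖ * ‖y‖) := by
  rcases eq_or_ne x 0 with rfl | hxne
  · simp
  rcases eq_or_ne y 0 with rfl | hyne
  · simp
  have hxn : (0:ℝ) < ‖x‖ := norm_pos_iff.mpr hxne
  have hyn : (0:ℝ) < ‖y‖ := norm_pos_iff.mpr hyne
  have hb : BddAbove {r : ℝ | ∃ v₁ v₂ : H, v₁ ∈ V₁ ∧ v₂ ∈ V₂ ∧ ‖v₁‖ = 1 ∧ ‖v₂‖ = 1 ∧
      v₁ ∈ (V₁ ⊓ V₂)ᗮ ∧ v₂ ∈ (V₁ ⊓ V₂)ᗮ ∧ r = |⟪v₁, v₂⟫|} := by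
    refine ⟨1, ?_⟩
    rintro s ⟨v₁, v₂, -, -, h1, h2, -, -, rfl⟩
    calc |⟪v₁, v₂⟫| ≤ ‖v₁‖ * ‖v₂‖ := abs_real_inner_le_norm v₁ v₂
      _ = 1 := by rw [h1, h2]; ring
  have hmem : |⟪(‖x‖⁻¹ • x), (‖y‖⁻¹ • y)⟫| ∈ {r : ℝ | ∃ v₁ v₂ : H, v₁ ∈ V₁ ∧ v₂ ∈ V₂ ∧
      ‖v₁‖ = 1 ∧ ‖v₂‖ = 1 ∧ v₁ ∈ (V₁ ⊓ V₂)ᗮ ∧ v₂ ∈ (V₁ ⊓ V₂)ᗮ ∧ r = |⟪v₁, v₂⟫|} := by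
    refine ⟨‖x‖⁻¹ • x, ‖y‖⁻¹ • y, V₁.smul_mem _ hx, V₂.smul_mem _ hy, ?_, ?_,
      Submodule.smul_mem _ _ hx0, Submodule.smul_mem _ _ hy0, rfl⟩
    · rw [norm_smul]; simp [hxn.ne']
    · rw [norm_smul]; simp [hyn.ne']
  have hle : |⟪(‖x‖⁻¹ • x), (‖y‖⁻¹ • y)⟫| ≤ friedrichsCos V₁ V₂ := le_csSup hb hmem
  have heq : |⟪(‖x‖⁻¹ • x), (‖y‖⁻¹ • y)⟫| = |⟪x, y⟫| / (‖x‖ * ‖y‖) := by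
    rw [real_inner_smul_left, real_inner_smul_right, abs_mul, abs_mul, abs_inv, abs_inv,
      abs_norm, abs_norm]
    field_simp
  rw [heq] at hle
  calc |⟪x, y⟫| = |⟪x, y⟫| / (‖x‖ * ‖y‖) * (‖x‖ * ‖y‖) := by field_simp
    _ ≤ friedrichsCos V₁ V₂ * (‖x‖ * ‖y‖) := by
        apply mul_le_mul_of_nonneg_right hle (by positivity)

theorem dist_inter_sq_le
    {H : Type*} [NormedAddCommGroup H] [InnerProductSpace ℝ H] [CompleteSpace H]
    (V₁ V₂ : Submodule ℝ H) (hV₁ : IsClosed (V₁ : Set H)) (hV₂ : IsClosed (V₂ : Set H))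
    (hε : friedrichsCos V₁ V₂ < 1) (w : H) :
    Metric.infDist w ((V₁ ⊓ V₂ : Submodule ℝ H) : Set H) ^ 2 ≤
      (1 / (1 - friedrichsCos V₁ V₂)) *
        (Metric.infDist w (V₁ : Set H) ^ 2 + Metric.infDist w (V₂ : Set H) ^ 2) := by
  set ε := friedrichsCos V₁ V₂ with hεdef
  have hε0 : 0 ≤ ε := friedrichsCos_nonneg V₁ V₂
  haveI : CompleteSpace V₁ := hV₁.completeSpace_coe
  haveI : CompleteSpace V₂ := hV₂.completeSpace_coe
  have hV₀ : IsClosed ((V₁ ⊓ V₂ : Submodule ℝ H) : Set H) := by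
    have : ((V₁ ⊓ V₂ : Submodule ℝ H) : Set H) = (V₁ : Set H) ∩ (V₂ : Set H) := rfl
    rw [this]; exact hV₁.inter hV₂
  haveI : CompleteSpace (V₁ ⊓ V₂ : Submodule ℝ H) := hV₀.completeSpace_coe
  set V₀ := V₁ ⊓ V₂ with hV₀def
  set p₀ : H := (Submodule.orthogonalProjectionOnto V₀ w : H) with hp₀
  set p₁ : H := (Submodule.orthogonalProjectionOnto V₁ w : H) with hp₁
  set p₂ : H := (Submodule.orthogonalProjectionOnto V₂ w : H) with hp₂
  set a : H := w - p₁ with ha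
  set b : H := w - p₂ with hb
  set x : H := p₁ - p₀ with hx
  set y : H := p₂ - p₀ with hy
  have h01 : V₀ ≤ V₁ := inf_le_left
  have h02 : V₀ ≤ V₂ := inf_le_right
  -- p₀ is also the projection of p₁ and p₂ onto V₀
  have hproj1 : (Submodule.orthogonalProjectionOnto V₀ p₁ : H) = p₀ := by
    rw [hp₁, hp₀, ← Submodule.starProjection_apply V₁, Submodule.orthogonalProjectionOnto_starProjection_of_le h01]
  have hproj2 : (Submodule.orthogonalProjectionOnto V₀ p₂ : H) = p₀ := by
    rw [hp₂, hp₀, ← Submodule.starProjection_apply V₂, Submodule.orthogonalProjectionOnto_starProjection_of_le h02]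
  have hx1 : x ∈ V₁ := V₁.sub_mem (Submodule.orthogonalProjectionOnto V₁ w).2 (h01 (Submodule.orthogonalProjectionOnto V₀ w).2)
  have hy2 : y ∈ V₂ := V₂.sub_mem (Submodule.orthogonalProjectionOnto V₂ w).2 (h02 (Submodule.orthogonalProjectionOnto V₀ w).2)
  have hx0 : x ∈ V₀ᗮ := by
    have : p₁ - (Submodule.orthogonalProjectionOnto V₀ p₁ : H) ∈ V₀ᗮ := Submodule.sub_starProjection_mem_orthogonal (K := V₀) p₁
    rwa [hproj1] at this
  have hy0 : y ∈ V₀ᗮ := by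
    have : p₂ - (Submodule.orthogonalProjectionOnto V₀ p₂ : H) ∈ V₀ᗮ := Submodule.sub_starProjection_mem_orthogonal (K := V₀) p₂
    rwa [hproj2] at this
  have ha1 : a ∈ V₁ᗮ := Submodule.sub_starProjection_mem_orthogonal (K := V₁) w
  have hb2 : b ∈ V₂ᗮ := Submodule.sub_starProjection_mem_orthogonal (K := V₂) w
  have hax : ⟪a, x⟫ = 0 := real_inner_comm x a ▸ ha1 x hx1
  have hby : ⟪b, y⟫ = 0 := real_inner_comm y b ▸ hb2 y hy2
  set u : H := w - p₀ with hu
  have hu1 : u = a + x := by rw [hu, ha, hx]; abel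
  have hu2 : u = b + y := by rw [hu, hb, hy]; abel
  -- Pythagoras
  have hpyth1 : ‖u‖ ^ 2 = ‖a‖ ^ 2 + ‖x‖ ^ 2 := by
    rw [hu1, norm_add_sq_real, hax]; ring
  have hpyth2 : ‖u‖ ^ 2 = ‖b‖ ^ 2 + ‖y‖ ^ 2 := by
    rw [hu2, norm_add_sq_real, hby]; ring
  have hux : ⟪u, x⟫ = ‖x‖ ^ 2 := by
    rw [hu1, inner_add_left, hax, real_inner_self_eq_norm_sq]; ring
  have huy : ⟪u, y⟫ = ‖y‖ ^ 2 := by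
    rw [hu2, inner_add_left, hby, real_inner_self_eq_norm_sq]; ring
  -- angle bound
  have hxy : ⟪x, y⟫ ≤ ε * (‖x‖ * ‖y‖) :=
    le_trans (le_abs_self _) (abs_inner_le_friedrichsCos V₁ V₂ hx1 hy2 hx0 hy0)
  -- key estimate : ‖x‖² + ‖y‖² ≤ (1+ε) ‖u‖²
  have hkey : ‖x‖ ^ 2 + ‖y‖ ^ 2 ≤ (1 + ε) * ‖u‖ ^ 2 := by
    rcases eq_or_lt_of_le (by positivity : (0:ℝ) ≤ ‖x‖ ^ 2 + ‖y‖ ^ 2) with h0 | h0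
    · rw [← h0]; positivity
    have hcs : ⟪u, x + y⟫ ≤ ‖u‖ * ‖x + y‖ := real_inner_le_norm u (x + y)
    have h1 : ‖x‖ ^ 2 + ‖y‖ ^ 2 = ⟪u, x + y⟫ := by rw [inner_add_right, hux, huy]
    have h2 : ‖x + y‖ ^ 2 ≤ (1 + ε) * (‖x‖ ^ 2 + ‖y‖ ^ 2) := by
      have := norm_add_sq_real x y
      have h2xy : 2 * ⟪x, y⟫ ≤ 2 * (ε * (‖x‖ * ‖y‖)) := by linarith
      have hamgm : ε * (‖x‖ * ‖y‖) ≤ ε * ((‖x‖ ^ 2 + ‖y‖ ^ 2) / 2) := by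
        apply mul_le_mul_of_nonneg_left _ hε0
        nlinarith [sq_nonneg (‖x‖ - ‖y‖)]
      nlinarith
    -- (p²+q²)² ≤ ‖u‖² (1+ε)(p²+q²)
    have h3 : (‖x‖ ^ 2 + ‖y‖ ^ 2) ^ 2 ≤ ‖u‖ ^ 2 * ((1 + ε) * (‖x‖ ^ 2 + ‖y‖ ^ 2)) := by
      have h4 : ⟪u, x + y⟫ ^ 2 ≤ ‖u‖ ^ 2 * ‖x + y‖ ^ 2 := by
        have := abs_real_inner_le_norm u (x + y)
        nlinarith [abs_nonneg ⟪u, x + y⟫, le_abs_self ⟪u, x + y⟫, neg_abs_le ⟪u, x + y⟫]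
      calc (‖x‖ ^ 2 + ‖y‖ ^ 2) ^ 2 = ⟪u, x + y⟫ ^ 2 := by rw [h1]
        _ ≤ ‖u‖ ^ 2 * ‖x + y‖ ^ 2 := h4
        _ ≤ ‖u‖ ^ 2 * ((1 + ε) * (‖x‖ ^ 2 + ‖y‖ ^ 2)) := by
            apply mul_le_mul_of_nonneg_left h2 (by positivity)
    have := mul_le_mul_of_nonneg_right (le_refl (‖x‖ ^ 2 + ‖y‖ ^ 2)) (le_of_lt h0)
    nlinarith [h3, h0]
  -- conclude
  have hd0 : Metric.infDist w ((V₀ : Submodule ℝ H) : Set H) = ‖u‖ :=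
    infDist_eq_norm_sub_proj V₀ w
  have hd1 : Metric.infDist w (V₁ : Set H) = ‖a‖ := infDist_eq_norm_sub_proj V₁ w
  have hd2 : Metric.infDist w (V₂ : Set H) = ‖b‖ := infDist_eq_norm_sub_proj V₂ w
  rw [hd0, hd1, hd2]
  have hfin : (1 - ε) * ‖u‖ ^ 2 ≤ ‖a‖ ^ 2 + ‖b‖ ^ 2 := by nlinarith
  rw [div_mul_eq_mul_div, one_mul, le_div_iff₀ (by linarith : (0:ℝ) < 1 - ε)]
  nlinarith
end

section
/- Let V₁, V₂ be closed subspaces of a Hilbert space with Friedrichs angle φ = ∠(V₁,V₂) ∈ (0, π/2]. For w ∈ H, let w₀ and w₁ be the orthogonal projections of w onto V₁ ∩ V₂ and V₁ respectively, and d₁(w), d₂(w) the distances from w to V₁, V₂. Then ‖w₁ − w₀‖ ≤ (cos φ · d₁(w) + d₂(w)) / sin φ. -/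
open scoped RealInnerProductSpace

lemma friedrichsCos_inner_le {H : Type*} [NormedAddCommGroup H] [InnerProductSpace ℝ H]
    (V₁ V₂ : Submodule ℝ H) {x y : H}
    (hx1 : x ∈ V₁) (hx2 : x ∈ (V₁ ⊓ V₂)ᗮ) (hy1 : y ∈ V₂) (hy2 : y ∈ (V₁ ⊓ V₂)ᗮ) :
    ⟪x, y⟫ ≤ friedrichsCos V₁ V₂ * ‖x‖ * ‖y‖ := by
  by_cases hx : x = 0
  · simp [hx]
  by_cases hy : y = 0
  · simp [hy]
  set S := {r : ℝ | ∃ v₁ v₂ : H, v₁ ∈ V₁ ∧ v₂ ∈ V₂ ∧ ‖v₁‖ = 1 ∧ ‖v₂‖ = 1 ∧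
    v₁ ∈ (V₁ ⊓ V₂)ᗮ ∧ v₂ ∈ (V₁ ⊓ V₂)ᗮ ∧ r = |⟪v₁, v₂⟫|} with hS
  set a := ‖x‖⁻¹ • x with ha
  set b := ‖y‖⁻¹ • y with hb
  have hna : ‖a‖ = 1 := norm_smul_inv_norm hx
  have hnb : ‖b‖ = 1 := norm_smul_inv_norm hy
  have hmem : |⟪a, b⟫| ∈ S :=
    ⟨a, b, Submodule.smul_mem _ _ hx1, Submodule.smul_mem _ _ hy1, hna, hnb,
      Submodule.smul_mem _ _ hx2, Submodule.smul_mem _ _ hy2, rfl⟩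
  have hbdd : BddAbove S := by
    refine ⟨1, ?_⟩
    rintro r ⟨v₁, v₂, _, _, h1, h2, _, _, rfl⟩
    calc |⟪v₁, v₂⟫| ≤ ‖v₁‖ * ‖v₂‖ := abs_real_inner_le_norm _ _
      _ = 1 := by rw [h1, h2, one_mul]
  have hle : |⟪a, b⟫| ≤ friedrichsCos V₁ V₂ := le_csSup hbdd hmem
  have hab : ⟪a, b⟫ = ‖x‖⁻¹ * (‖y‖⁻¹ * ⟪x, y⟫) := by
    rw [ha, hb, real_inner_smul_left, real_inner_smul_right]
  have hxn : (0:ℝ) < ‖x‖ := norm_pos_iff.mpr hx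
  have hyn : (0:ℝ) < ‖y‖ := norm_pos_iff.mpr hy
  have : ⟪x, y⟫ = ‖x‖ * ‖y‖ * ⟪a, b⟫ := by
    rw [hab]; field_simp
  rw [this]
  have h1 : ⟪a, b⟫ ≤ friedrichsCos V₁ V₂ := (le_abs_self _).trans hle
  calc ‖x‖ * ‖y‖ * ⟪a, b⟫ ≤ ‖x‖ * ‖y‖ * friedrichsCos V₁ V₂ := by
        apply mul_le_mul_of_nonneg_left h1 (by positivity)
    _ = friedrichsCos V₁ V₂ * ‖x‖ * ‖y‖ := by ring

lemma infDist_eq_norm_sub_orthProj {H : Type*} [NormedAddCommGroup H] [InnerProductSpace ℝ H]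
    (K : Submodule ℝ H) [K.HasOrthogonalProjection] (w : H) :
    Metric.infDist w (K : Set H) = ‖w - (K.orthogonalProjectionOnto w : H)‖ := by
  rw [Metric.infDist_eq_iInf, ← Submodule.starProjection_apply, Submodule.starProjection_minimal]
  simp_rw [dist_eq_norm]
  rfl

private lemma lemB_arith {c U t ρ : ℝ} (hc0 : 0 ≤ c) (hc1 : c ≤ 1)
    (hρ0 : 0 ≤ ρ) (ht0 : 0 ≤ t) (hU0 : 0 ≤ U)
    (hρct : ρ ≤ c * t) (htcU : t ≤ c * U) (htρU : t ^ 2 ≤ ρ * U) :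
    t ^ 2 - ρ ^ 2 ≤ c ^ 2 * (U ^ 2 - t ^ 2) := by
  have hρc2U : ρ ≤ c ^ 2 * U := by nlinarith
  have hρU : ρ ≤ U := by nlinarith
  nlinarith [mul_nonneg (sub_nonneg.2 hρc2U) (sub_nonneg.2 hρU),
    mul_nonneg (mul_nonneg hc0 hc0) (sub_nonneg.2 htρU)]

private lemma cancel_arith {a x : ℝ} (hx : 0 < x) (h : x ^ 2 ≤ a * x) : x ≤ a := by
  nlinarith

private lemma sqrt_arith {x y : ℝ} (hx : 0 ≤ x) (hy : 0 ≤ y) (h : x ^ 2 ≤ y ^ 2) : x ≤ y := by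
  nlinarith

private lemma sinU_arith {s c U t G : ℝ} (hsc : s ^ 2 + c ^ 2 = 1) (ht0 : 0 ≤ t)
    (hU0 : 0 ≤ U) (hc0 : 0 ≤ c) (htcU : t ≤ c * U) (hG2 : G ^ 2 = U ^ 2 - t ^ 2) :
    (s * U) ^ 2 ≤ G ^ 2 := by nlinarith

private lemma final_arith {s U G c d₁ d₂ : ℝ} (hs0 : 0 < s) (hU0 : 0 ≤ U) (hG0 : 0 ≤ G)
    (hc0 : 0 ≤ c) (hd1 : 0 ≤ d₁) (hd2 : 0 ≤ d₂)
    (hsU : s * U ≤ G) (hmain : G ^ 2 ≤ G * d₂ + c * G * d₁) : U * s ≤ c * d₁ + d₂ := by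
  rcases hG0.eq_or_lt with h | h
  · nlinarith
  · have hGle : G ≤ d₂ + c * d₁ := by nlinarith
    nlinarith

set_option maxHeartbeats 1600000 in
theorem dist_proj_to_intersection
    {H : Type*} [NormedAddCommGroup H] [InnerProductSpace ℝ H] [CompleteSpace H]
    (V₁ V₂ : Submodule ℝ H) (hV₁ : IsClosed (V₁ : Set H)) (hV₂ : IsClosed (V₂ : Set H))
    [CompleteSpace V₁] [CompleteSpace (V₁ ⊓ V₂ : Submodule ℝ H)]
    (φ : ℝ) (hφ₀ : 0 < φ) (hφ₁ : φ ≤ Real.pi / 2)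
    (hcos : Real.cos φ = friedrichsCos V₁ V₂) (w : H) :
    ‖(V₁.orthogonalProjectionOnto w : H) - ((V₁ ⊓ V₂ : Submodule ℝ H).orthogonalProjectionOnto w : H)‖ ≤
      (Real.cos φ * Metric.infDist w (V₁ : Set H) + Metric.infDist w (V₂ : Set H)) /
        Real.sin φ := by
  haveI : CompleteSpace V₂ := hV₂.completeSpace_coe
  set c := Real.cos φ with hc
  set s := Real.sin φ with hsdef
  have hpi := Real.pi_pos
  have hc0 : 0 ≤ c := Real.cos_nonneg_of_mem_Icc ⟨by linarith, hφ₁⟩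
  have hc1 : c ≤ 1 := Real.cos_le_one φ
  have hs0 : 0 < s := Real.sin_pos_of_pos_of_lt_pi hφ₀ (by linarith)
  have hsc : s ^ 2 + c ^ 2 = 1 := Real.sin_sq_add_cos_sq φ
  set M : Submodule ℝ H := V₁ ⊓ V₂ with hMdef
  rw [infDist_eq_norm_sub_orthProj V₁ w, infDist_eq_norm_sub_orthProj V₂ w]
  set w₀ : H := (M.orthogonalProjectionOnto w : H) with hw₀def
  set w₁ : H := (V₁.orthogonalProjectionOnto w : H) with hw₁def
  set w₂ : H := (V₂.orthogonalProjectionOnto w : H) with hw₂def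
  set d₁ : ℝ := ‖w - w₁‖ with hd₁def
  set d₂ : ℝ := ‖w - w₂‖ with hd₂def
  have hd1n : 0 ≤ d₁ := norm_nonneg _
  have hd2n : 0 ≤ d₂ := norm_nonneg _
  set u : H := w₁ - w₀ with hudef
  -- memberships
  have hw₀M : w₀ ∈ M := SetLike.coe_mem _
  have hw₀V₁ : w₀ ∈ V₁ := (Submodule.mem_inf.mp hw₀M).1
  have hw₀V₂ : w₀ ∈ V₂ := (Submodule.mem_inf.mp hw₀M).2
  have hw₁V₁ : w₁ ∈ V₁ := SetLike.coe_mem _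
  have hw₂V₂ : w₂ ∈ V₂ := SetLike.coe_mem _
  have huV₁ : u ∈ V₁ := Submodule.sub_mem _ hw₁V₁ hw₀V₁
  have hwV₁ : w - w₁ ∈ V₁ᗮ := Submodule.sub_starProjection_mem_orthogonal w
  have hwV₂ : w - w₂ ∈ V₂ᗮ := Submodule.sub_starProjection_mem_orthogonal w
  have hwM : w - w₀ ∈ Mᗮ := Submodule.sub_starProjection_mem_orthogonal w
  have hV₁M : V₁ᗮ ≤ Mᗮ := Submodule.orthogonal_le inf_le_left
  have hV₂M : V₂ᗮ ≤ Mᗮ := Submodule.orthogonal_le inf_le_right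
  have huM : u ∈ Mᗮ := by
    have h : u = (w - w₀) - (w - w₁) := by rw [hudef]; abel
    rw [h]
    exact Submodule.sub_mem _ hwM (hV₁M hwV₁)
  set p : H := (V₂.orthogonalProjectionOnto u : H) with hpdef
  set g : H := u - p with hgdef
  have hpV₂ : p ∈ V₂ := SetLike.coe_mem _
  have hgV₂ : g ∈ V₂ᗮ := Submodule.sub_starProjection_mem_orthogonal u
  have hpM : p ∈ Mᗮ := by
    have h : p = u - g := by rw [hgdef]; abel
    rw [h]
    exact Submodule.sub_mem _ huM (hV₂M hgV₂)
  set r : H := (V₁.orthogonalProjectionOnto p : H) with hrdef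
  have hrV₁ : r ∈ V₁ := SetLike.coe_mem _
  have hprV₁ : p - r ∈ V₁ᗮ := Submodule.sub_starProjection_mem_orthogonal p
  have hrM : r ∈ Mᗮ := by
    have h : r = p - (p - r) := by abel
    rw [h]
    exact Submodule.sub_mem _ hpM (hV₁M hprV₁)
  set U := ‖u‖ with hU
  set t := ‖p‖ with ht
  set ρ := ‖r‖ with hρ
  set G := ‖g‖ with hG
  have hU0 : 0 ≤ U := norm_nonneg _
  have ht0 : 0 ≤ t := norm_nonneg _
  have hρ0 : 0 ≤ ρ := norm_nonneg _
  have hG0 : 0 ≤ G := norm_nonneg _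
  -- inner product identities
  have hgp : ⟪p, g⟫ = 0 := Submodule.inner_right_of_mem_orthogonal hpV₂ hgV₂
  have hpu : ⟪p, u⟫ = t ^ 2 := by
    have : ⟪p, u⟫ = ⟪p, p⟫ + ⟪p, g⟫ := by
      rw [← inner_add_right]
      congr 1
      rw [hgdef]; abel
    rw [this, hgp, real_inner_self_eq_norm_sq, add_zero]
  have hrp : ⟪r, p⟫ = ρ ^ 2 := by
    have h0 : ⟪r, p - r⟫ = 0 := Submodule.inner_right_of_mem_orthogonal hrV₁ hprV₁
    have : ⟪r, p⟫ = ⟪r, r⟫ + ⟪r, p - r⟫ := by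
      rw [← inner_add_right]
      congr 1
      abel
    rw [this, h0, real_inner_self_eq_norm_sq, add_zero]
  -- angle bounds
  have hA1 : t ^ 2 ≤ c * U * t := by
    have := friedrichsCos_inner_le V₁ V₂ huV₁ huM hpV₂ hpM
    rw [← hcos] at this
    rw [← hpu, real_inner_comm]
    calc ⟪u, p⟫ ≤ c * ‖u‖ * ‖p‖ := this
      _ = c * U * t := rfl
  have hA2 : ρ ^ 2 ≤ c * ρ * t := by
    have := friedrichsCos_inner_le V₁ V₂ hrV₁ hrM hpV₂ hpM
    rw [← hcos] at this
    rw [← hrp]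
    calc ⟪r, p⟫ ≤ c * ‖r‖ * ‖p‖ := this
      _ = c * ρ * t := rfl
  have htcU : t ≤ c * U := by
    rcases ht0.eq_or_lt with h | h
    · rw [← h]; positivity
    · exact cancel_arith h hA1
  have hρct : ρ ≤ c * t := by
    rcases hρ0.eq_or_lt with h | h
    · rw [← h]; positivity
    · exact cancel_arith h (hA2.trans_eq (by ring))
  have htρU : t ^ 2 ≤ ρ * U := by
    have h0 : ⟪p - r, u⟫ = 0 := Submodule.inner_left_of_mem_orthogonal huV₁ hprV₁
    have h1 : ⟪p, u⟫ = ⟪r, u⟫ + ⟪p - r, u⟫ := by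
      rw [← inner_add_left]
      congr 1
      abel
    have h2 : ⟪r, u⟫ ≤ ρ * U := real_inner_le_norm r u
    rw [← hpu, h1, h0, add_zero]; exact h2
  have hgu : ⟪g, u⟫ = G ^ 2 := by
    have : ⟪g, u⟫ = ⟪g, g⟫ + ⟪g, p⟫ := by
      rw [← inner_add_right]
      congr 1
      rw [hgdef]; abel
    have hgp' : ⟪g, p⟫ = 0 := by rw [real_inner_comm]; exact hgp
    rw [this, hgp', real_inner_self_eq_norm_sq, add_zero]
  have hG2 : G ^ 2 = U ^ 2 - t ^ 2 := by
    have h1 : ⟪g, u⟫ = ⟪u, u⟫ - ⟪p, u⟫ := by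
      rw [← inner_sub_left]
    rw [← hgu, h1, real_inner_self_eq_norm_sq, hpu]
  have hpr2 : ‖p - r‖ ^ 2 = t ^ 2 - ρ ^ 2 := by
    have h0 : ⟪p - r, r⟫ = 0 := Submodule.inner_left_of_mem_orthogonal hrV₁ hprV₁
    have h1 : ⟪p - r, p - r⟫ = ⟪p - r, p⟫ - ⟪p - r, r⟫ := by rw [← inner_sub_right]
    have h2 : ⟪p - r, p⟫ = ⟪p, p⟫ - ⟪r, p⟫ := by rw [← inner_sub_left]
    rw [← real_inner_self_eq_norm_sq, h1, h2, h0, real_inner_self_eq_norm_sq, hrp, sub_zero]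
  -- Lemma B : ‖p - r‖ ≤ c * G
  have hB2 : ‖p - r‖ ^ 2 ≤ (c * G) ^ 2 := by
    rw [hpr2, mul_pow, hG2]
    exact lemB_arith hc0 hc1 hρ0 ht0 hU0 hρct htcU htρU
  have hB : ‖p - r‖ ≤ c * G := sqrt_arith (norm_nonneg _) (mul_nonneg hc0 hG0) hB2
  -- s * U ≤ G
  have hsU : s * U ≤ G :=
    sqrt_arith (mul_nonneg hs0.le hU0) hG0 (sinU_arith hsc ht0 hU0 hc0 htcU hG2)
  -- main estimate : G^2 ≤ G * d₂ + c * G * d₁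
  have hmain : G ^ 2 ≤ G * d₂ + c * G * d₁ := by
    have h1 : ⟪g, w₀⟫ = 0 := Submodule.inner_left_of_mem_orthogonal hw₀V₂ hgV₂
    have h2 : ⟪g, w₂⟫ = 0 := Submodule.inner_left_of_mem_orthogonal hw₂V₂ hgV₂
    have h3 : ⟪u - r, w₁ - w⟫ = 0 := by
      have h := Submodule.inner_right_of_mem_orthogonal (Submodule.sub_mem _ huV₁ hrV₁) hwV₁
      have : w₁ - w = -(w - w₁) := by abel
      rw [this, inner_neg_right, h, neg_zero]
    have hsplit : ⟪g, u⟫ = ⟪g, w - w₂⟫ + ⟪r - p, w₁ - w⟫ := by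
      have e1 : ⟪g, u⟫ = ⟪g, w₁⟫ - ⟪g, w₀⟫ := by rw [← inner_sub_right]
      have e2 : ⟪g, w₁⟫ = ⟪g, w - w₂⟫ + ⟪g, w₂⟫ + ⟪g, w₁ - w⟫ := by
        rw [← inner_add_right, ← inner_add_right]
        congr 1
        abel
      have e3 : ⟪g, w₁ - w⟫ = ⟪g - (u - r), w₁ - w⟫ + ⟪u - r, w₁ - w⟫ := by
        rw [← inner_add_left]
        congr 1
        abel
      have e4 : g - (u - r) = r - p := by rw [hgdef]; abel
      rw [e1, h1, sub_zero, e2, h2, add_zero, e3, e4, h3, add_zero]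
    have hb1 : ⟪g, w - w₂⟫ ≤ G * d₂ := by
      calc ⟪g, w - w₂⟫ ≤ ‖g‖ * ‖w - w₂‖ := real_inner_le_norm _ _
        _ = G * d₂ := rfl
    have hb2 : ⟪r - p, w₁ - w⟫ ≤ c * G * d₁ := by
      calc ⟪r - p, w₁ - w⟫ ≤ ‖r - p‖ * ‖w₁ - w‖ := real_inner_le_norm _ _
        _ = ‖p - r‖ * ‖w - w₁‖ := by rw [norm_sub_rev r p, norm_sub_rev w₁ w]
        _ ≤ (c * G) * ‖w - w₁‖ := mul_le_mul_of_nonneg_right hB (norm_nonneg _)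
        _ = c * G * d₁ := rfl
    calc G ^ 2 = ⟪g, u⟫ := hgu.symm
      _ = ⟪g, w - w₂⟫ + ⟪r - p, w₁ - w⟫ := hsplit
      _ ≤ G * d₂ + c * G * d₁ := add_le_add hb1 hb2
  -- conclude
  show U ≤ (c * d₁ + d₂) / s
  rw [le_div_iff₀ hs0]
  exact final_arith hs0 hU0 hG0 hc0 hd1n hd2n hsU hmain
end

section
/- Let V₁, V₂ be closed subspaces of a Hilbert space with ε = cos ∠(V₁,V₂) < 1. Then for any w ∈ H, d₀(w)² ≤ (d₁(w)² + 2ε d₁(w) d₂(w) + d₂(w)²) / (1 − ε²), where d₀, d₁, d₂ denote the distances from w to V₁ ∩ V₂, V₁, V₂ respectively. Equivalently, d₀(w)² ≤ dᵀ A⁻¹ d where A = [[1, −ε],[−ε, 1]] and d = (d₁(w), d₂(w))ᵀ. -/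
open scoped RealInnerProductSpace

section Aux

variable {H : Type*} [NormedAddCommGroup H] [InnerProductSpace ℝ H]

/-- The set appearing in the definition of `friedrichsCos`. -/
def fcSet (V₁ V₂ : Submodule ℝ H) : Set ℝ :=
  {r : ℝ | ∃ v₁ v₂ : H, v₁ ∈ V₁ ∧ v₂ ∈ V₂ ∧ ‖v₁‖ = 1 ∧ ‖v₂‖ = 1 ∧
    v₁ ∈ (V₁ ⊓ V₂)ᗮ ∧ v₂ ∈ (V₁ ⊓ V₂)ᗮ ∧ r = |⟪v₁, v₂⟫|}

lemma friedrichsCos_eq (V₁ V₂ : Submodule ℝ H) :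
    friedrichsCos V₁ V₂ = sSup (fcSet V₁ V₂) := rfl

lemma fc_bddAbove (V₁ V₂ : Submodule ℝ H) : BddAbove (fcSet V₁ V₂) := by
  refine ⟨1, ?_⟩
  rintro r ⟨v₁, v₂, -, -, h1, h2, -, -, rfl⟩
  calc |⟪v₁, v₂⟫| ≤ ‖v₁‖ * ‖v₂‖ := abs_real_inner_le_norm _ _
    _ = 1 := by rw [h1, h2, mul_one]

lemma fc_nonneg (V₁ V₂ : Submodule ℝ H) : 0 ≤ friedrichsCos V₁ V₂ := by
  rw [friedrichsCos_eq]
  rcases Set.eq_empty_or_nonempty (fcSet V₁ V₂) with h | h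
  · rw [h, Real.sSup_empty]
  · obtain ⟨r, hr⟩ := h
    have h0 : 0 ≤ r := by
      obtain ⟨v₁, v₂, -, -, -, -, -, -, rfl⟩ := hr
      exact abs_nonneg _
    exact h0.trans (le_csSup (fc_bddAbove V₁ V₂) hr)

lemma fc_le {V₁ V₂ : Submodule ℝ H} {x y : H} (hx1 : x ∈ V₁) (hx : x ∈ (V₁ ⊓ V₂)ᗮ)
    (hy2 : y ∈ V₂) (hy : y ∈ (V₁ ⊓ V₂)ᗮ) :
    ⟪x, y⟫ ≤ friedrichsCos V₁ V₂ * (‖x‖ * ‖y‖) := by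
  rcases eq_or_ne x 0 with rfl | hx0
  · simp [fc_nonneg]
  rcases eq_or_ne y 0 with rfl | hy0
  · simp [fc_nonneg]
  have hxn : (0:ℝ) < ‖x‖ := norm_pos_iff.2 hx0
  have hyn : (0:ℝ) < ‖y‖ := norm_pos_iff.2 hy0
  have hmem : |⟪(‖x‖⁻¹ • x), (‖y‖⁻¹ • y)⟫| ∈ fcSet V₁ V₂ :=
    ⟨‖x‖⁻¹ • x, ‖y‖⁻¹ • y, V₁.smul_mem _ hx1, V₂.smul_mem _ hy2,
      norm_smul_inv_norm hx0, norm_smul_inv_norm hy0,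
      Submodule.smul_mem _ _ hx, Submodule.smul_mem _ _ hy, rfl⟩
  have h1 : |⟪(‖x‖⁻¹ • x), (‖y‖⁻¹ • y)⟫| ≤ friedrichsCos V₁ V₂ := by
    rw [friedrichsCos_eq]
    exact le_csSup (fc_bddAbove V₁ V₂) hmem
  have h2 : |⟪(‖x‖⁻¹ • x), (‖y‖⁻¹ • y)⟫| = ‖x‖⁻¹ * (‖y‖⁻¹ * |⟪x, y⟫|) := by
    rw [real_inner_smul_left, real_inner_smul_right, abs_mul, abs_mul,
      abs_inv, abs_inv, abs_norm, abs_norm]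
  calc ⟪x, y⟫ ≤ |⟪x, y⟫| := le_abs_self _
    _ = (‖x‖ * ‖y‖) * (‖x‖⁻¹ * (‖y‖⁻¹ * |⟪x, y⟫|)) := by field_simp
    _ ≤ (‖x‖ * ‖y‖) * friedrichsCos V₁ V₂ := by
        refine mul_le_mul_of_nonneg_left ?_ (by positivity)
        rw [← h2]; exact h1
    _ = friedrichsCos V₁ V₂ * (‖x‖ * ‖y‖) := by ring

lemma fc_proj_mem_orthogonal {K W : Submodule ℝ H} [K.HasOrthogonalProjection] (hWK : W ≤ K)
    {x : H} (hx : x ∈ Wᗮ) : (Submodule.orthogonalProjectionOnto K x : H) ∈ Wᗮ := by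
  rw [Submodule.mem_orthogonal]
  intro v hv
  have h1 : ⟪v, x - Submodule.orthogonalProjectionOnto K x⟫ = 0 :=
    (Submodule.mem_orthogonal _ _).1 (Submodule.sub_starProjection_mem_orthogonal x) v (hWK hv)
  have h2 : ⟪v, x⟫ = 0 := (Submodule.mem_orthogonal _ _).1 hx v hv
  rw [inner_sub_right, h2, zero_sub, neg_eq_zero] at h1
  exact h1

lemma fc_infDist {K : Submodule ℝ H} [K.HasOrthogonalProjection] (w : H) :
    Metric.infDist w (K : Set H) = ‖w - Submodule.orthogonalProjectionOnto K w‖ := by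
  rw [Metric.infDist_eq_iInf, ← Submodule.starProjection_apply, Submodule.starProjection_minimal]
  simp_rw [dist_eq_norm]
  rfl

lemma fc_step (ε δ s₁ s₂ d₂ p q : ℝ) (hε : 0 ≤ ε) (hδ : 0 ≤ δ)
    (hδ2 : δ ^ 2 = 1 - ε ^ 2) (hs₁ : 0 ≤ s₁) (hs₂ : 0 ≤ s₂) (hd₂ : 0 ≤ d₂)
    (hpq : p ^ 2 + q ^ 2 = s₁ ^ 2) (hpε : p ≤ ε * s₁)
    (hcase : ε * d₂ ≤ δ * s₂) (hmain : s₁ ^ 2 ≤ p * s₂ + q * d₂) :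
    s₁ ≤ ε * s₂ + δ * d₂ := by
  have hE : 0 ≤ ε * s₁ - p := by linarith
  have hG : 0 ≤ s₂ * (ε * s₁ - p) + d₂ * (δ * s₁ - q) := by
    by_cases hqs : q ≤ δ * s₁
    · have h1 : 0 ≤ s₂ * (ε * s₁ - p) := mul_nonneg hs₂ hE
      have h2 : 0 ≤ d₂ * (δ * s₁ - q) := mul_nonneg hd₂ (by linarith)
      linarith
    · push_neg at hqs
      have hqpos : 0 < q + δ * s₁ := by nlinarith [mul_nonneg hδ hs₁]
      have t1 : 0 ≤ s₂ * (q - δ * s₁) := mul_nonneg hs₂ (by linarith)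
      have t2 : 0 ≤ s₁ * (δ * s₂ - ε * d₂) := mul_nonneg hs₁ (by linarith)
      have t3 : 0 ≤ d₂ * (ε * s₁ - p) := mul_nonneg hd₂ hE
      have hF : 0 ≤ s₂ * (q + δ * s₁) - d₂ * (ε * s₁ + p) := by linarith
      have hid : (s₂ * (ε * s₁ - p) + d₂ * (δ * s₁ - q)) * (q + δ * s₁)
          = (ε * s₁ - p) * (s₂ * (q + δ * s₁) - d₂ * (ε * s₁ + p)) := by
        linear_combination d₂ * s₁ ^ 2 * hδ2 - d₂ * hpq
      have h0 : 0 * (q + δ * s₁) ≤ (s₂ * (ε * s₁ - p) + d₂ * (δ * s₁ - q)) * (q + δ * s₁) := by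
        rw [hid, zero_mul]
        exact mul_nonneg hE hF
      exact le_of_mul_le_mul_right h0 hqpos
  rcases hs₁.eq_or_lt with h | h
  · rw [← h]; positivity
  · have h2 : s₁ * s₁ ≤ s₁ * (ε * s₂ + δ * d₂) := by nlinarith
    exact le_of_mul_le_mul_left h2 h

lemma fc_scalar (ε d₁ d₂ s₁ s₂ p₁ q₁ p₂ q₂ X : ℝ)
    (hε0 : 0 ≤ ε) (hε1 : ε < 1) (hd₁ : 0 ≤ d₁) (hd₂ : 0 ≤ d₂) (hs₁ : 0 ≤ s₁) (hs₂ : 0 ≤ s₂)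
    (hX1 : X = s₁ ^ 2 + d₁ ^ 2) (hX2 : X = s₂ ^ 2 + d₂ ^ 2)
    (hpq₁ : p₁ ^ 2 + q₁ ^ 2 = s₁ ^ 2) (hpε₁ : p₁ ≤ ε * s₁) (hmain₁ : s₁ ^ 2 ≤ p₁ * s₂ + q₁ * d₂)
    (hpq₂ : p₂ ^ 2 + q₂ ^ 2 = s₂ ^ 2) (hpε₂ : p₂ ≤ ε * s₂) (hmain₂ : s₂ ^ 2 ≤ p₂ * s₁ + q₂ * d₁) :
    (1 - ε ^ 2) * X ≤ d₁ ^ 2 + 2 * ε * d₁ * d₂ + d₂ ^ 2 := by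
  have hε2 : (0:ℝ) < 1 - ε ^ 2 := by nlinarith
  obtain ⟨δ, hδ, hδ2⟩ : ∃ δ : ℝ, 0 ≤ δ ∧ δ ^ 2 = 1 - ε ^ 2 :=
    ⟨Real.sqrt (1 - ε ^ 2), Real.sqrt_nonneg _, Real.sq_sqrt hε2.le⟩
  have hδpos : 0 < δ := by nlinarith
  have hεd : 0 ≤ ε * d₁ * d₂ := by positivity
  subst hX1
  by_cases hc2 : ε * d₂ ≤ δ * s₂
  · by_cases hc1 : ε * d₁ ≤ δ * s₁
    · have hA := fc_step ε δ s₁ s₂ d₂ p₁ q₁ hε0 hδ hδ2 hs₁ hs₂ hd₂ hpq₁ hpε₁ hc2 hmain₁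
      have hB := fc_step ε δ s₂ s₁ d₁ p₂ q₂ hε0 hδ hδ2 hs₂ hs₁ hd₁ hpq₂ hpε₂ hc1 hmain₂
      have h1 : δ * (δ * s₁) ≤ δ * (ε * d₁ + d₂) := by nlinarith
      have h2 : δ * s₁ ≤ ε * d₁ + d₂ := le_of_mul_le_mul_left h1 hδpos
      have h3 : (δ * s₁) * (δ * s₁) ≤ (ε * d₁ + d₂) * (ε * d₁ + d₂) :=
        mul_self_le_mul_self (by positivity) h2
      have h4 : (1 - ε ^ 2) * s₁ ^ 2 ≤ (ε * d₁ + d₂) * (ε * d₁ + d₂) := by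
        have he : (1 - ε ^ 2) * s₁ ^ 2 = (δ * s₁) * (δ * s₁) := by
          linear_combination (-(s₁ ^ 2)) * hδ2
        rw [he]; exact h3
      linarith [h4, hεd, sq_nonneg d₂]
    · push_neg at hc1
      have h3 : (δ * s₁) * (δ * s₁) ≤ (ε * d₁) * (ε * d₁) :=
        mul_self_le_mul_self (by positivity) hc1.le
      have h4 : (1 - ε ^ 2) * s₁ ^ 2 ≤ (ε * d₁) * (ε * d₁) := by
        have he : (1 - ε ^ 2) * s₁ ^ 2 = (δ * s₁) * (δ * s₁) := by
          linear_combination (-(s₁ ^ 2)) * hδ2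
        rw [he]; exact h3
      linarith [h4, hεd, sq_nonneg d₂]
  · push_neg at hc2
    have h3 : (δ * s₂) * (δ * s₂) ≤ (ε * d₂) * (ε * d₂) :=
      mul_self_le_mul_self (by positivity) hc2.le
    have h4 : (1 - ε ^ 2) * s₂ ^ 2 ≤ (ε * d₂) * (ε * d₂) := by
      have he : (1 - ε ^ 2) * s₂ ^ 2 = (δ * s₂) * (δ * s₂) := by
        linear_combination (-(s₂ ^ 2)) * hδ2
      rw [he]; exact h3
    have h5 : (1 - ε ^ 2) * (s₁ ^ 2 + d₁ ^ 2) = (1 - ε ^ 2) * (s₂ ^ 2 + d₂ ^ 2) := by rw [hX2]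
    linarith [h4, h5, hεd, sq_nonneg d₁]

end Aux

theorem dist_inter_sq_le_quadratic_form
    {H : Type*} [NormedAddCommGroup H] [InnerProductSpace ℝ H] [CompleteSpace H]
    (V₁ V₂ : Submodule ℝ H) (hV₁ : IsClosed (V₁ : Set H)) (hV₂ : IsClosed (V₂ : Set H))
    (hε : friedrichsCos V₁ V₂ < 1) (w : H) :
    Metric.infDist w ((V₁ ⊓ V₂ : Submodule ℝ H) : Set H) ^ 2 ≤
      (Metric.infDist w (V₁ : Set H) ^ 2 +
        2 * friedrichsCos V₁ V₂ * Metric.infDist w (V₁ : Set H) * Metric.infDist w (V₂ : Set H) +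
        Metric.infDist w (V₂ : Set H) ^ 2) / (1 - friedrichsCos V₁ V₂ ^ 2) := by
  have hε0 : 0 ≤ friedrichsCos V₁ V₂ := fc_nonneg V₁ V₂
  haveI : CompleteSpace V₁ := hV₁.completeSpace_coe
  haveI : CompleteSpace V₂ := hV₂.completeSpace_coe
  have hVc : IsClosed ((V₁ ⊓ V₂ : Submodule ℝ H) : Set H) := by
    rw [Submodule.coe_inf]; exact hV₁.inter hV₂
  haveI : CompleteSpace (V₁ ⊓ V₂ : Submodule ℝ H) := hVc.completeSpace_coe
  set ε := friedrichsCos V₁ V₂ with hεdef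
  set V := V₁ ⊓ V₂ with hVdef
  set z : H := (Submodule.orthogonalProjectionOnto V w : H) with hzdef
  set u : H := w - z with hudef
  have hzV : z ∈ V := by rw [hzdef]; exact Submodule.coe_mem _
  have huV : u ∈ Vᗮ := by
    rw [hudef, hzdef]; exact Submodule.sub_starProjection_mem_orthogonal w
  set a₁ : H := (Submodule.orthogonalProjectionOnto V₁ u : H) with ha₁def
  set b₁ : H := u - a₁ with hb₁def
  set a₂ : H := (Submodule.orthogonalProjectionOnto V₂ u : H) with ha₂def
  set b₂ : H := u - a₂ with hb₂def
  set c₁ : H := (Submodule.orthogonalProjectionOnto V₂ a₁ : H) with hc₁def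
  set c₂ : H := (Submodule.orthogonalProjectionOnto V₁ a₂ : H) with hc₂def
  have ha₁V₁ : a₁ ∈ V₁ := by rw [ha₁def]; exact Submodule.coe_mem _
  have ha₂V₂ : a₂ ∈ V₂ := by rw [ha₂def]; exact Submodule.coe_mem _
  have hc₁V₂ : c₁ ∈ V₂ := by rw [hc₁def]; exact Submodule.coe_mem _
  have hc₂V₁ : c₂ ∈ V₁ := by rw [hc₂def]; exact Submodule.coe_mem _
  have hb₁o : b₁ ∈ V₁ᗮ := by
    rw [hb₁def, ha₁def]; exact Submodule.sub_starProjection_mem_orthogonal u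
  have hb₂o : b₂ ∈ V₂ᗮ := by
    rw [hb₂def, ha₂def]; exact Submodule.sub_starProjection_mem_orthogonal u
  have hac₁ : a₁ - c₁ ∈ V₂ᗮ := by
    rw [hc₁def]; exact Submodule.sub_starProjection_mem_orthogonal a₁
  have hac₂ : a₂ - c₂ ∈ V₁ᗮ := by
    rw [hc₂def]; exact Submodule.sub_starProjection_mem_orthogonal a₂
  have ha₁V : a₁ ∈ Vᗮ := by rw [ha₁def]; exact fc_proj_mem_orthogonal inf_le_left huV
  have ha₂V : a₂ ∈ Vᗮ := by rw [ha₂def]; exact fc_proj_mem_orthogonal inf_le_right huV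
  have hc₁V : c₁ ∈ Vᗮ := by rw [hc₁def]; exact fc_proj_mem_orthogonal inf_le_right ha₁V
  have hc₂V : c₂ ∈ Vᗮ := by rw [hc₂def]; exact fc_proj_mem_orthogonal inf_le_left ha₂V
  -- distances
  have hd0 : Metric.infDist w (V : Set H) = ‖u‖ := by
    rw [hudef, hzdef]; exact fc_infDist w
  have hu1 : u = a₁ + b₁ := by rw [hb₁def]; abel
  have hu2 : u = a₂ + b₂ := by rw [hb₂def]; abel
  have hw1 : w - (Submodule.orthogonalProjectionOnto V₁ w : H) = b₁ := by
    have hz1 : (Submodule.orthogonalProjectionOnto V₁ z : H) = z :=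
      Submodule.starProjection_eq_self_iff.2 (Submodule.mem_inf.1 hzV).1
    have ha : a₁ = (Submodule.orthogonalProjectionOnto V₁ w : H) - z := by
      rw [ha₁def, hudef, map_sub, Submodule.coe_sub, hz1]
    rw [hb₁def, hudef, ha]; abel
  have hw2 : w - (Submodule.orthogonalProjectionOnto V₂ w : H) = b₂ := by
    have hz2 : (Submodule.orthogonalProjectionOnto V₂ z : H) = z :=
      Submodule.starProjection_eq_self_iff.2 (Submodule.mem_inf.1 hzV).2
    have ha : a₂ = (Submodule.orthogonalProjectionOnto V₂ w : H) - z := by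
      rw [ha₂def, hudef, map_sub, Submodule.coe_sub, hz2]
    rw [hb₂def, hudef, ha]; abel
  have hd1 : Metric.infDist w (V₁ : Set H) = ‖b₁‖ := by rw [fc_infDist w, hw1]
  have hd2 : Metric.infDist w (V₂ : Set H) = ‖b₂‖ := by rw [fc_infDist w, hw2]
  -- inner product identities
  have hip₁ : ⟪a₁, b₁⟫ = 0 := (Submodule.mem_orthogonal V₁ b₁).1 hb₁o a₁ ha₁V₁
  have hip₂ : ⟪a₂, b₂⟫ = 0 := (Submodule.mem_orthogonal V₂ b₂).1 hb₂o a₂ ha₂V₂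
  have hX1 : ‖u‖ ^ 2 = ‖a₁‖ ^ 2 + ‖b₁‖ ^ 2 := by
    rw [hu1, norm_add_sq_real, hip₁]; ring
  have hX2 : ‖u‖ ^ 2 = ‖a₂‖ ^ 2 + ‖b₂‖ ^ 2 := by
    rw [hu2, norm_add_sq_real, hip₂]; ring
  have hcc₁ : ⟪c₁, a₁ - c₁⟫ = 0 := (Submodule.mem_orthogonal V₂ (a₁ - c₁)).1 hac₁ c₁ hc₁V₂
  have hcc₂ : ⟪c₂, a₂ - c₂⟫ = 0 := (Submodule.mem_orthogonal V₁ (a₂ - c₂)).1 hac₂ c₂ hc₂V₁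
  have hsplit₁ : c₁ + (a₁ - c₁) = a₁ := by abel
  have hsplit₂ : c₂ + (a₂ - c₂) = a₂ := by abel
  have hpq₁ : ‖c₁‖ ^ 2 + ‖a₁ - c₁‖ ^ 2 = ‖a₁‖ ^ 2 := by
    calc ‖c₁‖ ^ 2 + ‖a₁ - c₁‖ ^ 2 = ‖c₁ + (a₁ - c₁)‖ ^ 2 := by
          rw [norm_add_sq_real, hcc₁]; ring
      _ = ‖a₁‖ ^ 2 := by rw [hsplit₁]
  have hpq₂ : ‖c₂‖ ^ 2 + ‖a₂ - c₂‖ ^ 2 = ‖a₂‖ ^ 2 := by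
    calc ‖c₂‖ ^ 2 + ‖a₂ - c₂‖ ^ 2 = ‖c₂ + (a₂ - c₂)‖ ^ 2 := by
          rw [norm_add_sq_real, hcc₂]; ring
      _ = ‖a₂‖ ^ 2 := by rw [hsplit₂]
  clear_value z u a₁ b₁ a₂ b₂ c₁ c₂
  -- p ≤ ε s
  have hpε₁ : ‖c₁‖ ≤ ε * ‖a₁‖ := by
    have hin : ⟪a₁, c₁⟫ = ‖c₁‖ ^ 2 := by
      have h0 : ⟪a₁ - c₁, c₁⟫ = 0 := by rw [real_inner_comm]; exact hcc₁
      rw [inner_sub_left] at h0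
      rw [← real_inner_self_eq_norm_sq]
      linarith
    have hfc := fc_le ha₁V₁ ha₁V hc₁V₂ hc₁V
    rw [hin] at hfc
    rcases (norm_nonneg c₁).eq_or_lt with h | h
    · rw [← h]; positivity
    · have hh : ‖c₁‖ * ‖c₁‖ ≤ (ε * ‖a₁‖) * ‖c₁‖ := by
        calc ‖c₁‖ * ‖c₁‖ = ‖c₁‖ ^ 2 := (sq ‖c₁‖).symm
          _ ≤ ε * (‖a₁‖ * ‖c₁‖) := hfc
          _ = (ε * ‖a₁‖) * ‖c₁‖ := by ring
      exact le_of_mul_le_mul_right hh h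
  have hpε₂ : ‖c₂‖ ≤ ε * ‖a₂‖ := by
    have hin : ⟪a₂, c₂⟫ = ‖c₂‖ ^ 2 := by
      have h0 : ⟪a₂ - c₂, c₂⟫ = 0 := by rw [real_inner_comm]; exact hcc₂
      rw [inner_sub_left] at h0
      rw [← real_inner_self_eq_norm_sq]
      linarith
    have hfc := fc_le hc₂V₁ hc₂V ha₂V₂ ha₂V
    rw [real_inner_comm] at hfc
    rw [hin] at hfc
    rcases (norm_nonneg c₂).eq_or_lt with h | h
    · rw [← h]; positivity
    · have hh : ‖c₂‖ * ‖c₂‖ ≤ (ε * ‖a₂‖) * ‖c₂‖ := by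
        calc ‖c₂‖ * ‖c₂‖ = ‖c₂‖ ^ 2 := (sq ‖c₂‖).symm
          _ ≤ ε * (‖c₂‖ * ‖a₂‖) := hfc
          _ = (ε * ‖a₂‖) * ‖c₂‖ := by ring
      exact le_of_mul_le_mul_right hh h
  -- main inequalities
  have hmain₁ : ‖a₁‖ ^ 2 ≤ ‖c₁‖ * ‖a₂‖ + ‖a₁ - c₁‖ * ‖b₂‖ := by
    have e1 : ⟪a₁, u⟫ = ‖a₁‖ ^ 2 := by
      rw [hu1, inner_add_right, hip₁, real_inner_self_eq_norm_sq]; ring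
    have z1 : ⟪c₁, b₂⟫ = 0 := (Submodule.mem_orthogonal V₂ b₂).1 hb₂o c₁ hc₁V₂
    have z2 : ⟪a₁ - c₁, a₂⟫ = 0 := by
      rw [real_inner_comm]
      exact (Submodule.mem_orthogonal V₂ (a₁ - c₁)).1 hac₁ a₂ ha₂V₂
    have e2 : ⟪a₁, u⟫ = ⟪c₁, a₂⟫ + ⟪a₁ - c₁, b₂⟫ := by
      calc ⟪a₁, u⟫ = ⟪c₁, u⟫ + ⟪a₁ - c₁, u⟫ := by rw [← inner_add_left, hsplit₁]
        _ = (⟪c₁, a₂⟫ + ⟪c₁, b₂⟫) + (⟪a₁ - c₁, a₂⟫ + ⟪a₁ - c₁, b₂⟫) := by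
            rw [hu2, inner_add_right, inner_add_right]
        _ = ⟪c₁, a₂⟫ + ⟪a₁ - c₁, b₂⟫ := by rw [z1, z2]; ring
    have e12 := e1.symm.trans e2
    have i1 : ⟪c₁, a₂⟫ ≤ ‖c₁‖ * ‖a₂‖ := real_inner_le_norm _ _
    have i2 : ⟪a₁ - c₁, b₂⟫ ≤ ‖a₁ - c₁‖ * ‖b₂‖ := real_inner_le_norm _ _
    linarith
  have hmain₂ : ‖a₂‖ ^ 2 ≤ ‖c₂‖ * ‖a₁‖ + ‖a₂ - c₂‖ * ‖b₁‖ := by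
    have e1 : ⟪a₂, u⟫ = ‖a₂‖ ^ 2 := by
      rw [hu2, inner_add_right, hip₂, real_inner_self_eq_norm_sq]; ring
    have z1 : ⟪c₂, b₁⟫ = 0 := (Submodule.mem_orthogonal V₁ b₁).1 hb₁o c₂ hc₂V₁
    have z2 : ⟪a₂ - c₂, a₁⟫ = 0 := by
      rw [real_inner_comm]
      exact (Submodule.mem_orthogonal V₁ (a₂ - c₂)).1 hac₂ a₁ ha₁V₁
    have e2 : ⟪a₂, u⟫ = ⟪c₂, a₁⟫ + ⟪a₂ - c₂, b₁⟫ := by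
      calc ⟪a₂, u⟫ = ⟪c₂, u⟫ + ⟪a₂ - c₂, u⟫ := by rw [← inner_add_left, hsplit₂]
        _ = (⟪c₂, a₁⟫ + ⟪c₂, b₁⟫) + (⟪a₂ - c₂, a₁⟫ + ⟪a₂ - c₂, b₁⟫) := by
            rw [hu1, inner_add_right, inner_add_right]
        _ = ⟪c₂, a₁⟫ + ⟪a₂ - c₂, b₁⟫ := by rw [z1, z2]; ring
    have e12 := e1.symm.trans e2
    have i1 : ⟪c₂, a₁⟫ ≤ ‖c₂‖ * ‖a₁‖ := real_inner_le_norm _ _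
    have i2 : ⟪a₂ - c₂, b₁⟫ ≤ ‖a₂ - c₂‖ * ‖b₁‖ := real_inner_le_norm _ _
    linarith
  have key := fc_scalar ε ‖b₁‖ ‖b₂‖ ‖a₁‖ ‖a₂‖ ‖c₁‖ ‖a₁ - c₁‖ ‖c₂‖ ‖a₂ - c₂‖ (‖u‖ ^ 2)
    hε0 hε (norm_nonneg _) (norm_nonneg _) (norm_nonneg _) (norm_nonneg _)
    hX1 hX2 hpq₁ hpε₁ hmain₁ hpq₂ hpε₂ hmain₂
  have hpos : (0:ℝ) < 1 - ε ^ 2 := by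
    have h2 := pow_lt_one₀ hε0 hε two_ne_zero
    linarith
  rw [hd0, hd1, hd2, le_div_iff₀ hpos]
  linarith [key]
end

section
/- For the n×n tridiagonal matrix A with 1 on the diagonal and −1/2 on the adjacent off-diagonals, let 𝟙 be the all-ones column vector. Then 𝟙ᵀ A⁻¹ 𝟙 = (n³ + 3n² + 2n)/6 = n(n+1)(n+2)/6. -/
/-- Extend a vector on `Fin n` by zero to all of `ℤ`. -/
noncomputable def tdExt (n : ℕ) (v : Fin n → ℝ) (k : ℤ) : ℝ :=
  if h : 0 ≤ k ∧ k < n then v ⟨k.toNat, by omega⟩ else 0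

lemma tdMulVec (n : ℕ) (A : Matrix (Fin n) (Fin n) ℝ)
    (hA : ∀ i j : Fin n, A i j =
      if i = j then 1 else if (i : ℕ) + 1 = (j : ℕ) ∨ (j : ℕ) + 1 = (i : ℕ) then -(1/2) else 0)
    (v : Fin n → ℝ) (i : Fin n) :
    A.mulVec v i = v i - (1/2) * tdExt n v ((i:ℤ) - 1) - (1/2) * tdExt n v ((i:ℤ) + 1) := by
  have hsummand : ∀ k : Fin n, A i k * v k =
      (if k = i then v k else 0) +
      ((if (k:ℕ) + 1 = (i:ℕ) then -(1/2) * v k else 0) +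
       (if (i:ℕ) + 1 = (k:ℕ) then -(1/2) * v k else 0)) := by
    intro k
    rw [hA]
    clear hA
    split_ifs <;> (first | ring1 | (exfalso; simp only [Fin.ext_iff] at *; omega))
  simp only [Matrix.mulVec, dotProduct]
  rw [Finset.sum_congr rfl (fun k _ => hsummand k), Finset.sum_add_distrib,
    Finset.sum_add_distrib, Finset.sum_ite_eq' Finset.univ i v, if_pos (Finset.mem_univ i)]
  have h2 : (∑ k : Fin n, if (k:ℕ) + 1 = (i:ℕ) then -(1/2) * v k else 0)
      = -(1/2) * tdExt n v ((i:ℤ) - 1) := by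
    by_cases h0 : (i:ℕ) = 0
    · rw [Finset.sum_eq_zero (fun k _ => by rw [if_neg (by omega)])]
      rw [tdExt, dif_neg (by omega)]
      ring
    · have hp : (i:ℕ) - 1 < n := by have := i.isLt; omega
      set p : Fin n := ⟨(i:ℕ) - 1, hp⟩ with hpdef
      have hiff : ∀ k : Fin n, ((k:ℕ) + 1 = (i:ℕ)) ↔ k = p := by
        intro k; rw [Fin.ext_iff]; simp only [hpdef]; omega
      simp only [hiff]
      rw [Finset.sum_ite_eq' Finset.univ p, if_pos (Finset.mem_univ p)]
      rw [tdExt, dif_pos (by constructor <;> omega)]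
      congr 1
      congr 1
      ext
      simp only [hpdef]
      omega
  have h3 : (∑ k : Fin n, if (i:ℕ) + 1 = (k:ℕ) then -(1/2) * v k else 0)
      = -(1/2) * tdExt n v ((i:ℤ) + 1) := by
    by_cases h0 : (i:ℕ) + 1 < n
    · set p : Fin n := ⟨(i:ℕ) + 1, h0⟩ with hpdef
      have hiff : ∀ k : Fin n, ((i:ℕ) + 1 = (k:ℕ)) ↔ k = p := by
        intro k; rw [Fin.ext_iff]; simp only [hpdef]; omega
      simp only [hiff]
      rw [Finset.sum_ite_eq' Finset.univ p, if_pos (Finset.mem_univ p)]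
      rw [tdExt, dif_pos (by constructor <;> omega)]
      rw [hpdef]
      exact congrArg (fun t => -(1/2) * v t) (Fin.ext (by simp only [Fin.val_mk]; omega))
    · rw [Finset.sum_eq_zero (fun k _ => by rw [if_neg (by have := k.isLt; omega)])]
      rw [tdExt, dif_neg (by omega)]
      ring
  rw [h2, h3]
  ring

lemma tdExt_self (n : ℕ) (v : Fin n → ℝ) (i : Fin n) : tdExt n v ((i:ℕ):ℤ) = v i := by
  rw [tdExt, dif_pos ⟨by omega, by exact_mod_cast i.isLt⟩]
  congr 1

/-- The explicit inverse (Green's function). -/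
noncomputable def tdB (n : ℕ) : Matrix (Fin n) (Fin n) ℝ := fun i j =>
  2 * (((min (i:ℕ) (j:ℕ) : ℕ) : ℝ) + 1) * ((n:ℝ) - ((max (i:ℕ) (j:ℕ) : ℕ) : ℝ)) / ((n:ℝ) + 1)

lemma tdExtB (n : ℕ) (j : Fin n) (k : ℤ) (hk1 : -1 ≤ k) (hk2 : k ≤ n) :
    tdExt n (fun t => tdB n t j) k =
      if k ≤ (j:ℤ) then 2 * ((k:ℝ) + 1) * ((n:ℝ) - (j:ℝ)) / ((n:ℝ) + 1)
      else 2 * ((j:ℝ) + 1) * ((n:ℝ) - (k:ℝ)) / ((n:ℝ) + 1) := by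
  have hj := j.isLt
  rcases lt_trichotomy k 0 with hk | hk | hk
  · have hkm : k = -1 := by omega
    subst hkm
    rw [tdExt, dif_neg (by omega), if_pos (by omega)]
    norm_num
  · subst hk
    rw [tdExt, dif_pos ⟨le_refl _, by omega⟩, if_pos (by omega)]
    rw [tdB]
    have h1 : min ((0:ℤ).toNat) (j:ℕ) = 0 := by omega
    have h2 : max ((0:ℤ).toNat) (j:ℕ) = (j:ℕ) := by omega
    simp only [Fin.val_mk, h1, h2]
    norm_num
  · by_cases hkn : k < n
    · rw [tdExt, dif_pos ⟨by omega, hkn⟩, tdB]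
      have hkt : ((k.toNat : ℕ) : ℝ) = (k:ℝ) := by
        exact_mod_cast Int.toNat_of_nonneg (le_of_lt hk)
      by_cases hkj : k ≤ (j:ℤ)
      · rw [if_pos hkj]
        have h1 : min (k.toNat) (j:ℕ) = k.toNat := by omega
        have h2 : max (k.toNat) (j:ℕ) = (j:ℕ) := by omega
        simp only [Fin.val_mk, h1, h2, hkt]
      · rw [if_neg hkj]
        have h1 : min (k.toNat) (j:ℕ) = (j:ℕ) := by omega
        have h2 : max (k.toNat) (j:ℕ) = k.toNat := by omega
        simp only [Fin.val_mk, h1, h2, hkt]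
    · have hkn' : k = (n:ℤ) := by omega
      subst hkn'
      rw [tdExt, dif_neg (by omega), if_neg (by omega)]
      push_cast
      ring

lemma tdExtB_le (n : ℕ) (j : Fin n) (k : ℤ) (hk1 : -1 ≤ k) (hk2 : k ≤ n) (hkj : k ≤ (j:ℤ)) :
    tdExt n (fun t => tdB n t j) k = 2 * ((k:ℝ) + 1) * ((n:ℝ) - (j:ℝ)) / ((n:ℝ) + 1) := by
  rw [tdExtB n j k hk1 hk2, if_pos hkj]

lemma tdExtB_ge (n : ℕ) (j : Fin n) (k : ℤ) (hk1 : -1 ≤ k) (hk2 : k ≤ n) (hkj : (j:ℤ) ≤ k) :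
    tdExt n (fun t => tdB n t j) k = 2 * ((j:ℝ) + 1) * ((n:ℝ) - (k:ℝ)) / ((n:ℝ) + 1) := by
  rw [tdExtB n j k hk1 hk2]
  split_ifs with h
  · have : k = (j:ℤ) := le_antisymm h hkj
    subst this
    norm_num
  · rfl

lemma tdAB (n : ℕ) (A : Matrix (Fin n) (Fin n) ℝ)
    (hA : ∀ i j : Fin n, A i j =
      if i = j then 1 else if (i : ℕ) + 1 = (j : ℕ) ∨ (j : ℕ) + 1 = (i : ℕ) then -(1/2) else 0) :
    A * tdB n = 1 := by
  ext i j
  have hi := i.isLt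
  have hj := j.isLt
  have hn1 : ((n:ℝ) + 1) ≠ 0 := by positivity
  rw [Matrix.mul_apply, Matrix.one_apply]
  have hmv : ∑ k, A i k * tdB n k j = A.mulVec (fun t => tdB n t j) i := rfl
  rw [hmv, tdMulVec n A hA]
  have hmid : tdB n i j = tdExt n (fun t => tdB n t j) ((i:ℕ):ℤ) :=
    (tdExt_self n (fun t => tdB n t j) i).symm
  rw [hmid]
  rcases lt_trichotomy (i:ℕ) (j:ℕ) with h | h | h
  · rw [if_neg (by simp only [Fin.ext_iff]; omega)]
    rw [tdExtB_le n j _ (by omega) (by omega) (by omega),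
        tdExtB_le n j _ (by omega) (by omega) (by omega),
        tdExtB_le n j _ (by omega) (by omega) (by omega)]
    push_cast
    field_simp
    ring
  · rw [if_pos (Fin.ext h)]
    rw [tdExtB_le n j _ (by omega) (by omega) (by omega),
        tdExtB_le n j _ (by omega) (by omega) (by omega),
        tdExtB_ge n j _ (by omega) (by omega) (by omega)]
    push_cast
    rw [h]
    field_simp
    ring
  · rw [if_neg (by simp only [Fin.ext_iff]; omega)]
    rw [tdExtB_ge n j _ (by omega) (by omega) (by omega),
        tdExtB_ge n j _ (by omega) (by omega) (by omega),
        tdExtB_ge n j _ (by omega) (by omega) (by omega)]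
    push_cast
    field_simp
    ring

lemma tdAx (n : ℕ) (A : Matrix (Fin n) (Fin n) ℝ)
    (hA : ∀ i j : Fin n, A i j =
      if i = j then 1 else if (i : ℕ) + 1 = (j : ℕ) ∨ (j : ℕ) + 1 = (i : ℕ) then -(1/2) else 0) :
    A.mulVec (fun i : Fin n => (((i:ℕ):ℝ) + 1) * ((n:ℝ) - ((i:ℕ):ℝ))) = fun _ => 1 := by
  set x : Fin n → ℝ := fun i : Fin n => (((i:ℕ):ℝ) + 1) * ((n:ℝ) - ((i:ℕ):ℝ)) with hx
  have hxe : ∀ k : ℤ, -1 ≤ k → k ≤ n → tdExt n x k = ((k:ℝ) + 1) * ((n:ℝ) - (k:ℝ)) := by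
    intro k h1 h2
    rcases eq_or_lt_of_le h1 with h | h
    · rw [tdExt, dif_neg (by omega), ← h]
      norm_num
    · rcases eq_or_lt_of_le h2 with h' | h'
      · rw [tdExt, dif_neg (by omega), h']
        push_cast
        ring
      · rw [tdExt, dif_pos ⟨by omega, h'⟩, hx]
        have hkt : (((k.toNat : ℕ)) : ℝ) = (k:ℝ) := by
          exact_mod_cast Int.toNat_of_nonneg (by omega)
        simp only [Fin.val_mk, hkt]
  funext i
  rw [tdMulVec n A hA]
  have hi := i.isLt
  have hmid : x i = tdExt n x ((i:ℕ):ℤ) := (tdExt_self n x i).symm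
  rw [hmid, hxe _ (by omega) (by omega), hxe _ (by omega) (by omega),
    hxe _ (by omega) (by omega)]
  push_cast
  ring


lemma tdSumLin (m : ℕ) : ∑ i ∈ Finset.range m, ((i:ℝ) + 1) = (m:ℝ) * ((m:ℝ)+1) / 2 := by
  induction m with
  | zero => simp
  | succ k ih =>
    rw [Finset.sum_range_succ, ih]
    push_cast
    ring

lemma tdSum (n : ℕ) :
    ∑ i ∈ Finset.range n, ((i:ℝ) + 1) * ((n:ℝ) - (i:ℝ))
      = ((n : ℝ) ^ 3 + 3 * (n : ℝ) ^ 2 + 2 * (n : ℝ)) / 6 := by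
  induction n with
  | zero => simp
  | succ m ih =>
    have hsplit : ∀ i : ℕ, ((i:ℝ)+1) * (((m+1:ℕ):ℝ) - (i:ℝ))
        = ((i:ℝ)+1) * ((m:ℝ) - (i:ℝ)) + ((i:ℝ)+1) := by
      intro i; push_cast; ring
    rw [Finset.sum_range_succ, Finset.sum_congr rfl (fun i _ => hsplit i),
      Finset.sum_add_distrib, ih, tdSumLin]
    push_cast
    ring

theorem tridiagonal_ones_quadratic_form
    (n : ℕ) (A : Matrix (Fin n) (Fin n) ℝ)
    (hA : ∀ i j : Fin n, A i j =
      if i = j then 1 else if (i : ℕ) + 1 = (j : ℕ) ∨ (j : ℕ) + 1 = (i : ℕ) then -(1/2) else 0) :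
    dotProduct (fun _ => (1:ℝ)) (A⁻¹.mulVec fun _ => (1:ℝ)) =
      ((n : ℝ) ^ 3 + 3 * (n : ℝ) ^ 2 + 2 * (n : ℝ)) / 6 := by
  have hdet : IsUnit A.det := Matrix.isUnit_det_of_right_inverse (tdAB n A hA)
  set x : Fin n → ℝ := fun i : Fin n => (((i:ℕ):ℝ) + 1) * ((n:ℝ) - ((i:ℕ):ℝ)) with hx
  have hinv : A⁻¹.mulVec (fun _ => (1:ℝ)) = x := by
    have h1 : A⁻¹.mulVec (A.mulVec x) = x := by
      rw [Matrix.mulVec_mulVec, Matrix.nonsing_inv_mul A hdet, Matrix.one_mulVec]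
    rw [← h1, tdAx n A hA]
  rw [hinv, dotProduct]
  simp only [one_mul]
  rw [← tdSum n]
  exact Fin.sum_univ_eq_sum_range (fun i => ((i:ℝ) + 1) * ((n:ℝ) - (i:ℝ))) n
end
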